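/- arXiv:1710.07133 — 6 statements merged into one kernel-verified Lean document; each statement's English description precedes it below -/
import Mathlib

section
/- Let (μ, P, H) be an admissible triple in ℝ³ whose support supp μ is contained in the closed unit ball {x ∈ ℝ³ : |x| ≤ 1}. Then the Willmore energy dominates the mass: ∫ |H|² dμ ≥ μ(ℝ³). -/
open MeasureTheory Metric Filter Topology
open scoped RealInnerProductSpace ENNReal

noncomputable section

/-- Euclidean three-space. -/
abbrev E3 : Type := EuclideanSpace ℝ (Fin 3)

/-- The support of a measure: points all of whose neighbourhoods have positive measure. -/
def mSupport (μ : Measure E3) : Set E3 := {x | ∀ r > 0, 0 < μ (ball x r)}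

/-- An admissible triple `(μ, P, H)`: a finite compactly supported Borel measure, a measurable
family of maps which μ-a.e. are orthogonal projections onto 2-dimensional planes (idempotent,
symmetric, of rank two), and an `L²(μ)` generalized mean curvature `H` satisfying the first
variation identity `∫ trace(P x ∘ DX x) dμ = -2 ∫ ⟨X x, H x⟩ dμ` for every compactly supported
`C¹` vector field `X`. -/
structure IsAdmissible (μ : Measure E3) (P : E3 → E3 →L[ℝ] E3) (H : E3 → E3) : Prop where
  finite : IsFiniteMeasure μ
  compact_support : IsCompact (mSupport μ)
  meas_P : ∀ v : E3, Measurable fun x => P x v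
  meas_H : AEStronglyMeasurable H μ
  proj_ae : ∀ᵐ x ∂μ, (P x).comp (P x) = P x ∧
      (∀ u v : E3, ⟪P x u, v⟫ = ⟪u, P x v⟫) ∧
      Module.finrank ℝ (LinearMap.range ((P x : E3 →ₗ[ℝ] E3))) = 2
  memL2 : MemLp H 2 μ
  first_variation : ∀ X : E3 → E3, ContDiff ℝ 1 X → HasCompactSupport X →
      ∫ x, LinearMap.trace ℝ E3 ((P x).comp (fderiv ℝ X x) : E3 →ₗ[ℝ] E3) ∂μ
        = -2 * ∫ x, ⟪X x, H x⟫ ∂μ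

/-- The generalized mean curvature is perpendicular: `(P x) (H x) = 0` for μ-a.e. `x`. -/
def IsPerp (μ : Measure E3) (P : E3 → E3 →L[ℝ] E3) (H : E3 → E3) : Prop :=
  ∀ᵐ x ∂μ, P x (H x) = 0

/-- The Willmore energy of an admissible triple. -/
def Willmore (μ : Measure E3) (H : E3 → E3) : ℝ := ∫ x, ‖H x‖ ^ 2 ∂μ

/-- The mass of a measure. -/
def Mass (μ : Measure E3) : ℝ := (μ Set.univ).toReal


lemma ae_mem_mSupport (μ : Measure E3) : ∀ᵐ x ∂μ, x ∈ mSupport μ := by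
  rw [ae_iff]
  apply measure_null_of_locally_null
  intro x hx
  simp only [Set.mem_setOf_eq, mSupport] at hx
  push_neg at hx
  obtain ⟨r, hr, hr0⟩ := hx
  exact ⟨ball x r, mem_nhdsWithin_of_mem_nhds (ball_mem_nhds x hr), le_antisymm hr0 bot_le⟩

/-- Willmore-vs-Area inequality in the unit ball: if the support of an admissible
triple is contained in the closed unit ball, then `∫ |H|² dμ ≥ μ(ℝ³)`. -/
theorem willmore_vs_area_inequality (μ : Measure E3) (P : E3 → E3 →L[ℝ] E3) (H : E3 → E3)
    (hadm : IsAdmissible μ P H) (hsupp : mSupport μ ⊆ closedBall 0 1) :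
    Mass μ ≤ Willmore μ H := by
  rw [Mass, Willmore]
  haveI := hadm.finite
  -- the test vector field
  let f : ContDiffBump (0 : E3) := ⟨2, 3, by norm_num, by norm_num⟩
  set X : E3 → E3 := fun x => f x • x with hX
  have hXc1 : ContDiff ℝ 1 X := f.contDiff.smul contDiff_id
  have hXcs : HasCompactSupport X :=
    f.hasCompactSupport.mono (Function.support_smul_subset_left (f : E3 → ℝ) (id : E3 → E3))
  -- a.e. x is in the closed unit ball
  have hball : ∀ᵐ x ∂μ, ‖x‖ ≤ 1 := by
    filter_upwards [ae_mem_mSupport μ] with x hx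
    simpa [mem_closedBall, dist_zero_right] using hsupp hx
  -- on the ball of radius 2, X = id, so fderiv X = id
  have hfd : ∀ x : E3, ‖x‖ ≤ 1 → fderiv ℝ X x = ContinuousLinearMap.id ℝ E3 := by
    intro x hx
    have hx2 : x ∈ ball (0 : E3) 2 := by
      simp only [mem_ball, dist_zero_right]; linarith
    have hev : X =ᶠ[𝓝 x] (fun y => y) := by
      filter_upwards [isOpen_ball.mem_nhds hx2] with y hy
      have : f y = 1 := f.one_of_mem_closedBall (ball_subset_closedBall hy)
      simp [hX, this]
    rw [hev.fderiv_eq, fderiv_id']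
  have hXx : ∀ x : E3, ‖x‖ ≤ 1 → X x = x := by
    intro x hx
    have : f x = 1 := f.one_of_mem_closedBall (by
      simp only [mem_closedBall, dist_zero_right]; linarith)
    simp [hX, this]
  -- trace computation
  have htr : ∀ᵐ x ∂μ,
      LinearMap.trace ℝ E3 ((P x).comp (fderiv ℝ X x) : E3 →ₗ[ℝ] E3) = 2 := by
    filter_upwards [hball, hadm.proj_ae] with x hx ⟨hidem, _, hrank⟩
    rw [hfd x hx]
    have hcomp : (P x).comp (ContinuousLinearMap.id ℝ E3) = P x := by
      ext v; simp
    rw [hcomp]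
    have hidem' : (P x : E3 →ₗ[ℝ] E3) ∘ₗ (P x : E3 →ₗ[ℝ] E3) = (P x : E3 →ₗ[ℝ] E3) := by
      exact congrArg (fun T : E3 →L[ℝ] E3 => (T : E3 →ₗ[ℝ] E3)) hidem
    have hprojx : LinearMap.IsProj (LinearMap.range ((P x : E3 →ₗ[ℝ] E3))) (P x : E3 →ₗ[ℝ] E3) := by
      constructor
      · intro y; exact LinearMap.mem_range_self _ y
      · rintro y ⟨z, rfl⟩
        have := LinearMap.congr_fun hidem' z
        simpa using this
    rw [hprojx.trace, hrank]
    norm_num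
  -- integrability facts
  have hHint : Integrable H μ := hadm.memL2.integrable one_le_two
  have hinner : AEStronglyMeasurable (fun x : E3 => ⟪x, H x⟫) μ :=
    (aestronglyMeasurable_id).inner hadm.meas_H
  have hginteg : Integrable (fun x : E3 => ⟪x, H x⟫) μ := by
    apply Integrable.mono' ((hHint.norm.const_mul 1).const_mul 1) hinner
    filter_upwards [hball] with x hx
    calc ‖⟪x, H x⟫‖ ≤ ‖x‖ * ‖H x‖ := norm_inner_le_norm x (H x)
      _ ≤ 1 * (1 * ‖H x‖) := by
          rw [one_mul]; exact mul_le_mul_of_nonneg_right hx (norm_nonneg _)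
  have hH2 : Integrable (fun x => ‖H x‖ ^ 2) μ := hadm.memL2.norm.integrable_sq
  -- first variation
  have hfv' := (hadm.first_variation) X hXc1 hXcs
  have hlhs : ∫ x, LinearMap.trace ℝ E3 ((P x).comp (fderiv ℝ X x) : E3 →ₗ[ℝ] E3) ∂μ
      = 2 * (μ Set.univ).toReal := by
    rw [integral_congr_ae htr, integral_const, smul_eq_mul, mul_comm]
    rfl
  have hrhs : ∫ x, ⟪X x, H x⟫ ∂μ = ∫ x, ⟪x, H x⟫ ∂μ := by
    apply integral_congr_ae
    filter_upwards [hball] with x hx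
    rw [hXx x hx]
  have hmass : (μ Set.univ).toReal = -∫ x, ⟪x, H x⟫ ∂μ := by
    rw [hlhs, hrhs] at hfv'; linarith
  -- final estimate
  have hbound : -∫ x, ⟪x, H x⟫ ∂μ ≤ ((μ Set.univ).toReal + ∫ x, ‖H x‖ ^ 2 ∂μ) / 2 := by
    rw [← integral_neg]
    have hmono : ∫ x, -⟪x, H x⟫ ∂μ ≤ ∫ x, (1 + ‖H x‖ ^ 2) / 2 ∂μ := by
      apply integral_mono_ae hginteg.neg (((integrable_const 1).add hH2).div_const 2)
      filter_upwards [hball] with x hx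
      show -⟪x, H x⟫ ≤ (1 + ‖H x‖ ^ 2) / 2
      have h1 : -⟪x, H x⟫ ≤ ‖x‖ * ‖H x‖ := by
        have := abs_real_inner_le_norm x (H x)
        have h2 := neg_abs_le (⟪x, H x⟫)
        linarith
      have h2 : ‖x‖ * ‖H x‖ ≤ ‖H x‖ :=
        (mul_le_of_le_one_left (norm_nonneg _) hx)
      nlinarith [sq_nonneg (‖H x‖ - 1)]
    calc ∫ x, -⟪x, H x⟫ ∂μ ≤ ∫ x, (1 + ‖H x‖ ^ 2) / 2 ∂μ := hmono
      _ = ((μ Set.univ).toReal + ∫ x, ‖H x‖ ^ 2 ∂μ) / 2 := by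
        rw [integral_div, integral_add (integrable_const 1) hH2, integral_const]
        simp
        rfl
  linarith


end
end

section
/- Let (μ, P, H) be an admissible triple in ℝ³ whose support is contained in the closed ball {x ∈ ℝ³ : |x| ≤ 1/2} of radius 1/2 centered at the origin. Then ∫ |H|² dμ ≥ (7/4) μ(ℝ³). -/
open MeasureTheory Metric Filter
open scoped RealInnerProductSpace ENNReal

noncomputable section

/-- if the support of an admissible triple is contained in the closed ball of
radius `1/2` centered at the origin, then `∫ |H|² dμ ≥ (7/4) μ(ℝ³)`. -/
theorem willmore_vs_area_half_ball (μ : Measure E3) (P : E3 → E3 →L[ℝ] E3) (H : E3 → E3)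
    (hadm : IsAdmissible μ P H) (hsupp : mSupport μ ⊆ closedBall 0 (1 / 2)) :
    (7 / 4 : ℝ) * Mass μ ≤ Willmore μ H := by
  have hfin : IsFiniteMeasure μ := hadm.finite
  -- μ-a.e. every point lies in the closed ball of radius 1/2
  have hae : ∀ᵐ x ∂μ, x ∈ closedBall (0 : E3) (1 / 2) := by
    rw [ae_iff]
    refine measure_null_of_locally_null _ fun x hx => ?_
    have hxns : x ∉ mSupport μ := fun h => hx (hsupp h)
    simp only [mSupport, Set.mem_setOf_eq, not_forall] at hxns
    push_neg at hxns
    obtain ⟨r, hr, h0⟩ := hxns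
    exact ⟨ball x r, mem_nhdsWithin_of_mem_nhds (ball_mem_nhds x hr),
      le_antisymm h0 zero_le⟩
  -- the cutoff vector field X x = f x • x
  set f : ContDiffBump (0 : E3) := ⟨3 / 4, 1, by norm_num, by norm_num⟩ with hf
  set X : E3 → E3 := fun x => f x • x with hX
  have hXc1 : ContDiff ℝ 1 X := f.contDiff.smul contDiff_id
  have hXcs : HasCompactSupport X := f.hasCompactSupport.smul_right
  have hXeq : ∀ x : E3, x ∈ closedBall (0 : E3) (1 / 2) → X x = x := by
    intro x hx
    have : f x = 1 := f.one_of_mem_closedBall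
      (closedBall_subset_closedBall (by norm_num) hx)
    simp [hX, this]
  have hXfd : ∀ x : E3, x ∈ closedBall (0 : E3) (1 / 2) →
      fderiv ℝ X x = ContinuousLinearMap.id ℝ E3 := by
    intro x hx
    have hmem : closedBall (0 : E3) (3 / 4) ∈ nhds x := by
      refine closedBall_mem_nhds_of_mem ?_
      have := mem_closedBall.1 hx
      simpa [mem_ball] using lt_of_le_of_lt this (by norm_num)
    have heq : X =ᶠ[nhds x] id := by
      filter_upwards [hmem] with y hy
      have : f y = 1 := f.one_of_mem_closedBall hy
      simp [hX, this]
    rw [heq.fderiv_eq, fderiv_id]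
  -- a.e., the integrand on the left equals 2
  have htr : ∀ᵐ x ∂μ,
      LinearMap.trace ℝ E3 ((P x).comp (fderiv ℝ X x) : E3 →ₗ[ℝ] E3) = 2 := by
    filter_upwards [hae, hadm.proj_ae] with x hx hPx
    obtain ⟨hPP, -, hrank⟩ := hPx
    rw [hXfd x hx, ContinuousLinearMap.comp_id]
    have hproj : LinearMap.IsProj (LinearMap.range ((P x : E3 →ₗ[ℝ] E3)))
        ((P x : E3 →ₗ[ℝ] E3)) := by
      constructor
      · intro y; exact LinearMap.mem_range_self _ y
      · rintro y ⟨z, rfl⟩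
        have := congrArg (fun T : E3 →L[ℝ] E3 => T z) hPP
        simpa using this
    rw [hproj.trace, hrank]
    norm_num
  have hLHS : ∫ x, LinearMap.trace ℝ E3 ((P x).comp (fderiv ℝ X x) : E3 →ₗ[ℝ] E3) ∂μ
      = 2 * Mass μ := by
    rw [integral_congr_ae htr, integral_const, Mass]
    simp [mul_comm]
    rfl
  have hFV := hadm.first_variation X hXc1 hXcs
  -- basic integrability facts
  have hH1 : Integrable H μ := hadm.memL2.integrable (by norm_num)
  have hH2 : Integrable (fun x => ‖H x‖ ^ 2) μ := by
    have := hadm.memL2.integrable_norm_rpow (by norm_num) (by norm_num)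
    simpa [ENNReal.toReal_ofNat, Real.rpow_natCast] using this
  have hib : Integrable (fun x => ‖H x‖ ^ 2 / 8 + 1 / 2) μ := by
    exact ((hH2.div_const 8).add (integrable_const _))
  have hXHm : AEStronglyMeasurable (fun x => ⟪X x, H x⟫) μ := by
    exact (hXc1.continuous.aestronglyMeasurable).inner hadm.meas_H
  have hXHint : Integrable (fun x => ⟪X x, H x⟫) μ := by
    refine Integrable.mono' (hH2.div_const 8 |>.add (integrable_const (1 / 2 : ℝ))) hXHm ?_
    filter_upwards [hae] with x hx
    rw [hXeq x hx]
    have h1 : |⟪x, H x⟫| ≤ ‖x‖ * ‖H x‖ := abs_real_inner_le_norm x (H x)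
    have h2 : ‖x‖ ≤ 1 / 2 := by simpa using mem_closedBall.1 hx
    have h3 : ‖x‖ * ‖H x‖ ≤ (1 / 2) * ‖H x‖ :=
      mul_le_mul_of_nonneg_right h2 (norm_nonneg _)
    have h4 : (1 / 2) * ‖H x‖ ≤ ‖H x‖ ^ 2 / 8 + 1 / 2 := by nlinarith [norm_nonneg (H x), sq_nonneg (‖H x‖ - 2)]
    calc ‖⟪x, H x⟫‖ = |⟪x, H x⟫| := Real.norm_eq_abs _
      _ ≤ ‖x‖ * ‖H x‖ := h1
      _ ≤ ‖H x‖ ^ 2 / 8 + 1 / 2 := le_trans h3 h4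
  -- from the first variation: Mass μ = ∫ -⟪X x, H x⟫
  have hMass : Mass μ = ∫ x, -⟪X x, H x⟫ ∂μ := by
    rw [integral_neg]
    rw [hLHS] at hFV
    linarith
  -- pointwise bound and conclusion
  have hmono : ∫ x, -⟪X x, H x⟫ ∂μ ≤ ∫ x, (‖H x‖ ^ 2 / 8 + 1 / 2) ∂μ := by
    refine integral_mono_ae hXHint.neg hib ?_
    filter_upwards [hae] with x hx
    rw [hXeq x hx]
    have h1 : |⟪x, H x⟫| ≤ ‖x‖ * ‖H x‖ := abs_real_inner_le_norm x (H x)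
    have h2 : ‖x‖ ≤ 1 / 2 := by simpa using mem_closedBall.1 hx
    have h5 : -⟪x, H x⟫ ≤ |⟪x, H x⟫| := neg_le_abs _
    nlinarith [norm_nonneg (H x), sq_nonneg (‖H x‖ - 2), abs_nonneg ⟪x, H x⟫,
      mul_le_mul_of_nonneg_right h2 (norm_nonneg (H x))]
  have hrhs : ∫ x, (‖H x‖ ^ 2 / 8 + 1 / 2) ∂μ = Willmore μ H / 8 + Mass μ / 2 := by
    rw [integral_add (hH2.div_const 8) (integrable_const _), integral_div, integral_const]
    simp [Willmore, Mass, div_eq_mul_inv, mul_comm]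
    rfl
  have hW0 : 0 ≤ Willmore μ H := integral_nonneg fun x => by positivity
  have hM0 : 0 ≤ Mass μ := ENNReal.toReal_nonneg
  rw [hrhs] at hmono
  rw [hMass] at *
  linarith


end
end

section
/- There exists a constant C > 0, independent of all the data, with the following property. Let (μ, P, H) be an admissible triple in ℝ³ with H perpendicular and let y ∈ ℝ³ satisfy liminf_{σ→0} μ(B_σ(y))/σ² ≥ π. Then for every ρ > 0, π ≤ C ( μ(B_ρ(y))/ρ² + ∫_{B_ρ(y)} |H|² dμ ). -/
open MeasureTheory Metric Filter
open scoped RealInnerProductSpace ENNReal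

noncomputable section

/-- Bound for the derivative of the smooth transition function. -/
def transM : ℝ := sSup ((fun t => |deriv Real.smoothTransition t|) '' Set.Icc (0:ℝ) 1)

lemma continuous_deriv_trans : Continuous (deriv Real.smoothTransition) := by
  exact (Real.smoothTransition.contDiff (n := (⊤ : ℕ∞))).continuous_deriv (by exact_mod_cast le_top)

lemma deriv_trans_nonpos {u : ℝ} (hu : u ≤ 0) : deriv Real.smoothTransition u = 0 := by
  rcases lt_or_eq_of_le hu with h | h
  · have hev : Real.smoothTransition =ᶠ[nhds u] fun _ => (0:ℝ) := by
      filter_upwards [Iio_mem_nhds h] with t ht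
      exact Real.smoothTransition.zero_of_nonpos (le_of_lt ht)
    rw [hev.deriv_eq, deriv_const]
  · subst h
    have hmin : IsLocalMin Real.smoothTransition 0 := by
      apply isMinOn_univ_iff.mpr ?_ |>.isLocalMin Filter.univ_mem
      intro t
      rw [Real.smoothTransition.zero]
      exact Real.smoothTransition.nonneg t
    exact hmin.deriv_eq_zero

lemma deriv_trans_eq_zero_of_one_le {u : ℝ} (hu : 1 ≤ u) : deriv Real.smoothTransition u = 0 := by
  rcases lt_or_eq_of_le hu with h | h
  · have hev : Real.smoothTransition =ᶠ[nhds u] fun _ => (1:ℝ) := by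
      filter_upwards [Ioi_mem_nhds h] with t ht
      exact Real.smoothTransition.one_of_one_le (le_of_lt ht)
    rw [hev.deriv_eq, deriv_const]
  · subst h
    have hmax : IsLocalMax Real.smoothTransition 1 := by
      apply isMaxOn_univ_iff.mpr ?_ |>.isLocalMax Filter.univ_mem
      intro t
      rw [Real.smoothTransition.one]
      exact Real.smoothTransition.le_one t
    exact hmax.deriv_eq_zero

lemma bddAbove_img : BddAbove ((fun t => |deriv Real.smoothTransition t|) '' Set.Icc (0:ℝ) 1) :=
  (isCompact_Icc.image (continuous_deriv_trans.abs)).bddAbove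

lemma transM_nonneg : 0 ≤ transM := by
  have h : |deriv Real.smoothTransition 0| ∈
      (fun t => |deriv Real.smoothTransition t|) '' Set.Icc (0:ℝ) 1 :=
    ⟨0, by norm_num⟩
  exact le_trans (abs_nonneg _) (le_csSup bddAbove_img h)

lemma abs_deriv_trans_le (t : ℝ) : |deriv Real.smoothTransition t| ≤ transM := by
  rcases le_or_gt t 0 with h | h
  · rw [deriv_trans_nonpos h, abs_zero]; exact transM_nonneg
  rcases le_or_gt 1 t with h1 | h1
  · rw [deriv_trans_eq_zero_of_one_le h1, abs_zero]; exact transM_nonneg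
  · exact le_csSup bddAbove_img ⟨t, ⟨le_of_lt h, le_of_lt h1⟩, rfl⟩

/-- The cutoff: equals 1 on `(-∞, 1/4]`, 0 on `[1/2, ∞)`. -/
def ηf (t : ℝ) : ℝ := Real.smoothTransition (2 - 4*t)

/-- Derivative of the cutoff. -/
def ηd (t : ℝ) : ℝ := -4 * deriv Real.smoothTransition (2 - 4*t)

lemma ηf_nonneg (t : ℝ) : 0 ≤ ηf t := Real.smoothTransition.nonneg _
lemma ηf_le_one (t : ℝ) : ηf t ≤ 1 := Real.smoothTransition.le_one _
lemma ηf_eq_one {t : ℝ} (h : t ≤ 1/4) : ηf t = 1 :=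
  Real.smoothTransition.one_of_one_le (by linarith)
lemma ηf_eq_zero {t : ℝ} (h : 1/2 ≤ t) : ηf t = 0 :=
  Real.smoothTransition.zero_of_nonpos (by linarith)
lemma ηd_eq_zero {t : ℝ} (h : 1/2 ≤ t) : ηd t = 0 := by
  rw [ηd, deriv_trans_nonpos (by linarith), mul_zero]
lemma abs_ηd_le (t : ℝ) : |ηd t| ≤ 4 * transM := by
  rw [ηd, abs_mul]
  calc |(-4:ℝ)| * |deriv Real.smoothTransition (2 - 4*t)|
      ≤ 4 * transM := by
        rw [abs_neg, abs_of_nonneg (by norm_num : (0:ℝ) ≤ 4)]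
        exact mul_le_mul_of_nonneg_left (abs_deriv_trans_le _) (by norm_num)

lemma contDiff_ηf : ContDiff ℝ 1 ηf :=
  Real.smoothTransition.contDiff.comp (contDiff_const.sub (contDiff_const.mul contDiff_id))

lemma hasDerivAt_ηf (t : ℝ) : HasDerivAt ηf (ηd t) t := by
  have h1 : HasDerivAt (fun t : ℝ => 2 - 4*t) (-4) t := by
    have h := (hasDerivAt_const t (2:ℝ)).sub ((hasDerivAt_id t).const_mul 4)
    simp only [id_eq, mul_one, zero_sub] at h
    exact h
  have h2 : HasDerivAt Real.smoothTransition
      (deriv Real.smoothTransition (2 - 4*t)) (2 - 4*t) :=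
    (Real.smoothTransition.contDiff (n := 1)).differentiable (by norm_num) |>.differentiableAt
      |>.hasDerivAt
  have h3 := h2.comp t h1
  have he : ηf = Real.smoothTransition ∘ fun s : ℝ => 2 - 4*s := rfl
  rw [he, ηd]
  exact h3.congr_deriv (by ring)

/-- Trace via the standard basis of `E3`. -/
lemma trace_eq_sum_coord (f : E3 →ₗ[ℝ] E3) :
    LinearMap.trace ℝ E3 f = ∑ i : Fin 3, f ((PiLp.basisFun 2 ℝ (Fin 3)) i) i := by
  rw [LinearMap.trace_eq_matrix_trace ℝ (PiLp.basisFun 2 ℝ (Fin 3))]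
  simp [Matrix.trace, Matrix.diag, LinearMap.toMatrix_apply, PiLp.basisFun_repr]

/-- The trace of an idempotent with rank-two range is `2`. -/
lemma trace_proj_eq_two (p : E3 →L[ℝ] E3)
    (hidem : p.comp p = p)
    (hrank : Module.finrank ℝ (LinearMap.range ((p : E3 →ₗ[ℝ] E3))) = 2) :
    LinearMap.trace ℝ E3 (p : E3 →ₗ[ℝ] E3) = 2 := by
  have hlin : (p : E3 →ₗ[ℝ] E3) ∘ₗ (p : E3 →ₗ[ℝ] E3) = (p : E3 →ₗ[ℝ] E3) := by
    have h1 : ∀ v, p (p v) = p v := fun v => by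
      have := congrArg (fun f => f v) hidem
      simpa using this
    ext v
    simp only [LinearMap.comp_apply, ContinuousLinearMap.coe_coe]
    rw [h1 v]
  obtain ⟨q, hq⟩ := (LinearMap.isProj_iff_isIdempotentElem _).mpr hlin
  have hqr : q = LinearMap.range (p : E3 →ₗ[ℝ] E3) := by
    apply le_antisymm
    · intro v hv
      exact ⟨v, hq.map_id v hv⟩
    · rintro _ ⟨v, rfl⟩
      exact hq.map_mem v
  rw [hq.trace, hqr, hrank]
  norm_num

lemma inner_basis (w : E3) (i : Fin 3) : ⟪w, (PiLp.basisFun 2 ℝ (Fin 3)) i⟫ = w i := by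
  simp [PiLp.basisFun_apply, PiLp.inner_apply, Pi.single_apply]

/-- Trace of `A ∘ (a Id + (2b ⟪w,·⟫) w)`. -/
lemma trace_comp_D (A : E3 →L[ℝ] E3) (a b : ℝ) (w : E3) :
    LinearMap.trace ℝ E3
        ((A.comp (a • ContinuousLinearMap.id ℝ E3 +
          (b • (2 • innerSL ℝ w)).smulRight w)) : E3 →ₗ[ℝ] E3)
      = a * LinearMap.trace ℝ E3 (A : E3 →ₗ[ℝ] E3) + 2 * b * ⟪w, A w⟫ := by
  rw [trace_eq_sum_coord, trace_eq_sum_coord]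
  have hAw : ⟪w, A w⟫ = ∑ i : Fin 3, w i * (A w) i := by
    simp [PiLp.inner_apply]
    exact Finset.sum_congr rfl fun i _ => mul_comm _ _
  rw [hAw]
  rw [Finset.mul_sum, Finset.mul_sum, ← Finset.sum_add_distrib]
  apply Finset.sum_congr rfl
  intro i _
  have : (A ((a • ContinuousLinearMap.id ℝ E3 +
      (b • (2 • innerSL ℝ w)).smulRight w) ((PiLp.basisFun 2 ℝ (Fin 3)) i)))
      = a • A ((PiLp.basisFun 2 ℝ (Fin 3)) i) + (b * (2 * ⟪w, (PiLp.basisFun 2 ℝ (Fin 3)) i⟫)) • A w := by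
    simp [ContinuousLinearMap.add_apply, ContinuousLinearMap.smul_apply,
      ContinuousLinearMap.smulRight_apply, innerSL_apply_apply, map_add, _root_.map_smul, smul_smul]
  simp only [ContinuousLinearMap.coe_coe, this, inner_basis]
  simp [PiLp.add_apply, PiLp.smul_apply, smul_eq_mul, PiLp.inner_apply, PiLp.single_apply]
  ring


lemma small_ineq (K r D σ s : ℝ) (hK0 : 0 ≤ K) (hr : 0 ≤ r) (hD : 0 ≤ D)
    (hDs : D * s ≤ 1) (hDσ : D ≤ σ) (hs : 0 ≤ s) :
    (K * r * D + D * D) * s ≤ K * r + σ := by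
  have c1 := mul_le_mul_of_nonneg_left hDs (mul_nonneg hK0 hr)
  have c2 := mul_le_mul_of_nonneg_left hDs hD
  nlinarith [c1, c2]

lemma arith_key (σ ρ a b e h η η' K u : ℝ)
    (hρ : 0 < ρ) (ha : 0 ≤ a) (hb : 0 ≤ b) (hh : 0 ≤ h)
    (hη0 : 0 ≤ η) (hη1 : η ≤ 1) (hη' : -K ≤ η') (hK : 0 ≤ K)
    (hu : (a + b^2 + σ^2) * u = 1) (hu0 : 0 ≤ u)
    (he : -(b*h) ≤ e) :
    2*η*(σ^2*u^2) ≤ (η*u*2 + 2*(η'*(ρ^2)⁻¹*u + η*(-(1:ℝ)*u^2))*a) + 2*(η*u)*e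
      + (2*K*(ρ^2)⁻¹ + h^2/2) := by
  have hρ2 : 0 ≤ (ρ^2)⁻¹ := by positivity
  have h1 : 2*η*u = 2*η*u^2*(a+b^2+σ^2) := by
    rw [← mul_one (2*η*u), ← hu]; ring
  have h2 : 0 ≤ 2*η*(u*b - h/2)^2 := by positivity
  have h3 : u*a ≤ 1 := by nlinarith [sq_nonneg b, sq_nonneg σ, mul_nonneg hu0 ha]
  have h4 : 0 ≤ 2*η'*(ρ^2)⁻¹*(u*a) + 2*K*(ρ^2)⁻¹ := by
    have e1 : 0 ≤ (η' + K) * (u*a) := mul_nonneg (by linarith) (mul_nonneg hu0 ha)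
    have e2 : 0 ≤ K * (1 - u*a) := mul_nonneg hK (by linarith)
    nlinarith [mul_nonneg hρ2 e1, mul_nonneg hρ2 e2]
  have h5 : -(2*η*u*(b*h)) ≤ 2*(η*u)*e := by
    have := mul_le_mul_of_nonneg_left he (by positivity : 0 ≤ 2*(η*u))
    nlinarith [this]
  have h6 : 0 ≤ (1-η)*h^2/2 := by nlinarith [sq_nonneg h]
  nlinarith [h1, h2, h4, h5, h6]

set_option maxHeartbeats 2000000 in
lemma main_estimate (μ : Measure E3) (P : E3 → E3 →L[ℝ] E3) (H : E3 → E3)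
    (adm : IsAdmissible μ P H) (perp : IsPerp μ P H) (y : E3)
    {ρ σ : ℝ} (hρ : 0 < ρ) (hσ : 0 < σ) (hσρ : σ ≤ ρ/2) :
    (μ (ball y σ)).toReal / σ^2
      ≤ (16*transM) * ((μ (ball y ρ)).toReal / ρ^2) + ∫ x in ball y ρ, ‖H x‖^2 ∂μ := by
  haveI : IsFiniteMeasure μ := adm.finite
  have hρ2 : (0:ℝ) < ρ^2 := by positivity
  have hσ2 : (0:ℝ) < σ^2 := by positivity
  set K : ℝ := 4 * transM with hKdef
  have hK0 : 0 ≤ K := by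
    have := transM_nonneg; rw [hKdef]; linarith
  set q : E3 → ℝ := fun x => ‖x - y‖^2 with hqdef
  set g : ℝ → ℝ := fun s => ηf (s/ρ^2) * (s + σ^2)⁻¹ with hgdef
  set gd : ℝ → ℝ := fun s =>
    (ηd (s/ρ^2) * (ρ^2)⁻¹) * (s + σ^2)⁻¹ + ηf (s/ρ^2) * (-1 / (s + σ^2)^2) with hgddef
  set X : E3 → E3 := fun x => g (q x) • (x - y) with hXdef
  have hq0 : ∀ x : E3, 0 ≤ q x := fun x => by rw [hqdef]; positivity
  have hden : ∀ s : ℝ, 0 ≤ s → s + σ^2 ≠ 0 := fun s hs => by positivity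
  -- derivative of g
  have hgDeriv : ∀ s : ℝ, 0 ≤ s → HasDerivAt g (gd s) s := by
    intro s hs
    have h1 : HasDerivAt (fun r : ℝ => ηf (r/ρ^2)) (ηd (s/ρ^2) * (ρ^2)⁻¹) s := by
      have := (hasDerivAt_ηf (s/ρ^2)).comp s ((hasDerivAt_id s).div_const (ρ^2))
      simpa [Function.comp_def, div_eq_mul_inv] using this
    have h2 : HasDerivAt (fun r : ℝ => (r + σ^2)⁻¹) (-1 / (s+σ^2)^2) s := by
      have := ((hasDerivAt_id s).add_const (σ^2)).inv (hden s hs)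
      exact this
    exact h1.mul h2
  -- derivative of q
  have hqDeriv : ∀ x : E3, HasFDerivAt q (2 • innerSL ℝ (x - y)) x := by
    intro x
    have h0 : HasFDerivAt (fun z : E3 => z - y) (ContinuousLinearMap.id ℝ E3) x :=
      (hasFDerivAt_id x).sub_const y
    have := h0.norm_sq
    simpa [hqdef] using this
  -- derivative of X
  set Dm : E3 → (E3 →L[ℝ] E3) := fun x =>
    g (q x) • ContinuousLinearMap.id ℝ E3 +
      ((gd (q x)) • (2 • innerSL ℝ (x - y))).smulRight (x - y) with hDdef
  have hXDeriv : ∀ x : E3, HasFDerivAt X (Dm x) x := by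
    intro x
    have hc : HasFDerivAt (fun z : E3 => g (q z)) ((gd (q x)) • (2 • innerSL ℝ (x - y))) x := by
      have := (hgDeriv (q x) (hq0 x)).comp_hasFDerivAt x (hqDeriv x)
      simpa [Function.comp_def] using this
    have hf : HasFDerivAt (fun z : E3 => z - y) (ContinuousLinearMap.id ℝ E3) x :=
      (hasFDerivAt_id x).sub_const y
    exact hc.smul hf
  -- smoothness of X
  have hXC : ContDiff ℝ 1 X := by
    rw [contDiff_iff_contDiffAt]
    intro x
    have hqC : ContDiffAt ℝ 1 q x := by
      have : ContDiff ℝ 1 q := ContDiff.norm_sq (𝕜 := ℝ) (contDiff_id.sub contDiff_const)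
      exact this.contDiffAt
    have hgC : ContDiffAt ℝ 1 g (q x) := by
      have h1 : ContDiffAt ℝ 1 (fun r : ℝ => ηf (r/ρ^2)) (q x) :=
        (contDiff_ηf.contDiffAt).comp (q x) (contDiffAt_id.div_const _)
      have h2 : ContDiffAt ℝ 1 (fun r : ℝ => (r + σ^2)⁻¹) (q x) :=
        ((contDiffAt_id.add contDiffAt_const).inv (hden _ (hq0 x)))
      exact h1.mul h2
    exact (hgC.comp x hqC).smul ((contDiff_id.sub contDiff_const).contDiffAt)
  -- cutoff vanishing
  have hg_zero : ∀ s : ℝ, ρ^2/2 ≤ s → ηf (s/ρ^2) = 0 ∧ ηd (s/ρ^2) = 0 := by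
    intro s hs
    have h : (1:ℝ)/2 ≤ s/ρ^2 := by
      rw [le_div_iff₀ hρ2]; linarith
    exact ⟨ηf_eq_zero h, ηd_eq_zero h⟩
  -- compact support
  have hXsupp : HasCompactSupport X := by
    apply HasCompactSupport.intro (isCompact_closedBall y ρ)
    intro x hx
    have hdist : ρ < dist x y := by
      simpa [Metric.mem_closedBall, not_le] using hx
    have hnorm : ρ ≤ ‖x - y‖ := by rw [← dist_eq_norm]; linarith
    have hs : ρ^2/2 ≤ q x := by
      have h2 : ρ^2 ≤ ‖x - y‖^2 := by
        have := pow_le_pow_left₀ (le_of_lt hρ) hnorm 2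
        simpa using this
      rw [hqdef]; dsimp only; linarith
    have hz := (hg_zero _ hs).1
    rw [hXdef]; dsimp only
    rw [hgdef]; dsimp only
    rw [hz, zero_mul, zero_smul]
  -- the trace identity
  set Tf : E3 → ℝ := fun x =>
    g (q x) * (LinearMap.trace ℝ E3 ((P x : E3 →ₗ[ℝ] E3))) +
      2 * gd (q x) * ⟪x - y, P x (x - y)⟫ with hTdef
  have htrace : ∀ x : E3,
      LinearMap.trace ℝ E3 ((P x).comp (fderiv ℝ X x) : E3 →ₗ[ℝ] E3) = Tf x := by
    intro x
    rw [(hXDeriv x).fderiv, hDdef]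
    dsimp only
    rw [trace_comp_D (P x) (g (q x)) (gd (q x)) (x - y)]
  -- the first variation identity
  have hfv : ∫ x, Tf x ∂μ = -2 * ∫ x, ⟪X x, H x⟫ ∂μ := by
    have h := adm.first_variation X hXC hXsupp
    simp only [htrace] at h
    exact h
  -- elementary bounds on g, gd
  have hg_bound : ∀ s : ℝ, 0 ≤ s → |g s| ≤ (σ^2)⁻¹ := by
    intro s hs
    rw [hgdef]; dsimp only
    rw [abs_mul]
    have h1 : |ηf (s/ρ^2)| ≤ 1 := by
      rw [abs_of_nonneg (ηf_nonneg _)]; exact ηf_le_one _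
    have h2 : |(s + σ^2)⁻¹| ≤ (σ^2)⁻¹ := by
      rw [abs_of_nonneg (by positivity)]
      exact inv_anti₀ hσ2 (by linarith)
    calc |ηf (s/ρ^2)| * |(s + σ^2)⁻¹| ≤ 1 * (σ^2)⁻¹ :=
          mul_le_mul h1 h2 (abs_nonneg _) (by norm_num)
      _ = (σ^2)⁻¹ := one_mul _
  have hgd_bound : ∀ s : ℝ, 0 ≤ s → |gd s| * s ≤ K * (ρ^2)⁻¹ + (σ^2)⁻¹ := by
    intro s hs
    rw [hgddef]; dsimp only
    have hD0 : 0 < s + σ^2 := by positivity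
    have hDinv0 : (0:ℝ) ≤ (s + σ^2)⁻¹ := by positivity
    have hρinv0 : (0:ℝ) ≤ (ρ^2)⁻¹ := by positivity
    have hDs : (s + σ^2)⁻¹ * s ≤ 1 := by
      rw [← inv_mul_cancel₀ (ne_of_gt hD0)]
      exact mul_le_mul_of_nonneg_left (by linarith) hDinv0
    have hDσ : (s + σ^2)⁻¹ ≤ (σ^2)⁻¹ := inv_anti₀ hσ2 (by linarith)
    have e1 : |ηd (s/ρ^2)| ≤ K := by rw [hKdef]; exact abs_ηd_le _
    have habs : |ηd (s/ρ^2) * (ρ^2)⁻¹ * (s+σ^2)⁻¹ + ηf (s/ρ^2) * (-1 / (s+σ^2)^2)|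
        ≤ K * (ρ^2)⁻¹ * (s+σ^2)⁻¹ + (s+σ^2)⁻¹ * (s+σ^2)⁻¹ := by
      refine (abs_add_le _ _).trans ?_
      have b1 : |ηd (s/ρ^2) * (ρ^2)⁻¹ * (s+σ^2)⁻¹| ≤ K * (ρ^2)⁻¹ * (s+σ^2)⁻¹ := by
        rw [abs_mul, abs_mul, abs_of_nonneg hρinv0, abs_of_nonneg hDinv0]
        exact mul_le_mul_of_nonneg_right (mul_le_mul_of_nonneg_right e1 hρinv0) hDinv0
      have b2 : |ηf (s/ρ^2) * (-1 / (s+σ^2)^2)| ≤ (s+σ^2)⁻¹ * (s+σ^2)⁻¹ := by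
        rw [abs_mul]
        have hval : |(-1 : ℝ) / (s+σ^2)^2| = (s+σ^2)⁻¹ * (s+σ^2)⁻¹ := by
          rw [abs_div, abs_neg, abs_one, abs_of_nonneg (le_of_lt (pow_pos hD0 2))]
          rw [one_div, pow_two, mul_inv]
        rw [hval, abs_of_nonneg (ηf_nonneg _)]
        nlinarith [ηf_le_one (s/ρ^2), ηf_nonneg (s/ρ^2), mul_nonneg hDinv0 hDinv0]
      linarith
    calc |ηd (s/ρ^2) * (ρ^2)⁻¹ * (s+σ^2)⁻¹ + ηf (s/ρ^2) * (-1 / (s+σ^2)^2)| * s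
        ≤ (K * (ρ^2)⁻¹ * (s+σ^2)⁻¹ + (s+σ^2)⁻¹ * (s+σ^2)⁻¹) * s :=
          mul_le_mul_of_nonneg_right habs hs
      _ ≤ K * (ρ^2)⁻¹ + (σ^2)⁻¹ :=
          small_ineq K ((ρ^2)⁻¹) ((s+σ^2)⁻¹) ((σ^2)⁻¹) s hK0 hρinv0 hDinv0 hDs hDσ hs
  -- integrability facts
  have hH1 : Integrable H μ := adm.memL2.integrable (by norm_num)
  have hH2 : Integrable (fun x => ‖H x‖^2) μ := by
    have h := adm.memL2.integrable_norm_rpow (by norm_num) (by norm_num)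
    have : (fun x => ‖H x‖ ^ (2:ℝ≥0∞).toReal) = fun x => ‖H x‖^2 := by
      funext x
      rw [ENNReal.toReal_ofNat]
      rw [show ((2:ℝ)) = ((2:ℕ):ℝ) by norm_num, Real.rpow_natCast]
    rwa [this] at h
  -- measurability
  have hcoord : ∀ (v : E3) (i : Fin 3), Measurable fun x : E3 => (P x v) i := by
    intro v i
    have := adm.meas_P v; fun_prop
  have htraceP_meas : Measurable fun x => LinearMap.trace ℝ E3 ((P x : E3 →ₗ[ℝ] E3)) := by
    have hrw : (fun x => LinearMap.trace ℝ E3 ((P x : E3 →ₗ[ℝ] E3)))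
        = fun x => ∑ i : Fin 3, (P x ((PiLp.basisFun 2 ℝ (Fin 3)) i)) i := by
      funext x
      rw [trace_eq_sum_coord]
      simp
    rw [hrw]
    exact Finset.measurable_sum _ (fun i _ => hcoord _ i)
  have hPw_meas : Measurable fun x : E3 => P x (x - y) := by
    have hdecomp : ∀ x : E3, P x (x - y)
        = ∑ i : Fin 3, ((x - y) i) • P x ((PiLp.basisFun 2 ℝ (Fin 3)) i) := by
      intro x
      have hb := (PiLp.basisFun 2 ℝ (Fin 3)).sum_repr (x - y)
      calc P x (x - y)
          = P x (∑ i : Fin 3, (PiLp.basisFun 2 ℝ (Fin 3)).repr (x-y) i •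
              (PiLp.basisFun 2 ℝ (Fin 3)) i) := by rw [hb]
        _ = ∑ i : Fin 3, ((x - y) i) • P x ((PiLp.basisFun 2 ℝ (Fin 3)) i) := by
            rw [map_sum]
            refine Finset.sum_congr rfl fun i _ => ?_
            rw [_root_.map_smul, PiLp.basisFun_repr]
    rw [show (fun x : E3 => P x (x-y))
        = fun x => ∑ i : Fin 3, ((x - y) i) • P x ((PiLp.basisFun 2 ℝ (Fin 3)) i)
      from funext hdecomp]
    refine Finset.measurable_sum _ fun i _ => ?_
    have := adm.meas_P ((PiLp.basisFun 2 ℝ (Fin 3)) i); fun_prop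
  have hinnerPw_meas : Measurable fun x : E3 => (⟪x - y, P x (x - y)⟫ : ℝ) :=
    Measurable.inner (measurable_id.sub measurable_const) hPw_meas
  have hq_cont : Continuous q := by
    rw [hqdef]
    exact ((continuous_id.sub continuous_const).norm).pow 2
  have hηf_cont : Continuous ηf := (contDiff_ηf.continuous)
  have hηd_cont : Continuous ηd := by
    have : Continuous fun t : ℝ => deriv Real.smoothTransition (2 - 4*t) :=
      continuous_deriv_trans.comp (by continuity)
    exact continuous_const.mul this
  have hgq_cont : Continuous fun x => g (q x) := by
    rw [hgdef]
    exact ((hηf_cont.comp (hq_cont.div_const _))).mul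
      (Continuous.inv₀ (hq_cont.add continuous_const) (fun x => hden _ (hq0 x)))
  have hgdq_cont : Continuous fun x => gd (q x) := by
    rw [hgddef]
    apply Continuous.add
    · exact ((hηd_cont.comp (hq_cont.div_const _)).mul continuous_const).mul
        (Continuous.inv₀ (hq_cont.add continuous_const) (fun x => hden _ (hq0 x)))
    · exact (hηf_cont.comp (hq_cont.div_const _)).mul
        (Continuous.div continuous_const ((hq_cont.add continuous_const).pow 2)
          (fun x => pow_ne_zero 2 (hden _ (hq0 x))))
  have hTf_meas : Measurable Tf := by
    rw [hTdef]
    exact (hgq_cont.measurable.mul htraceP_meas).add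
      ((measurable_const.mul hgdq_cont.measurable).mul hinnerPw_meas)
  -- integrability of Tf
  have hTf_int : Integrable Tf μ := by
    apply Integrable.mono' (integrable_const (2*(σ^2)⁻¹ + 2*(K * (ρ^2)⁻¹ + (σ^2)⁻¹)))
      hTf_meas.aestronglyMeasurable
    filter_upwards [adm.proj_ae] with x hx
    obtain ⟨hidem, hsym, hrank⟩ := hx
    have htr : LinearMap.trace ℝ E3 ((P x : E3 →ₗ[ℝ] E3)) = 2 :=
      trace_proj_eq_two _ hidem hrank
    have hPP : P x (P x (x-y)) = P x (x-y) := by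
      have := congrArg (fun f => f (x - y)) hidem
      simpa using this
    have ha : ⟪x-y, P x (x-y)⟫ = ‖P x (x-y)‖^2 := by
      calc ⟪x-y, P x (x-y)⟫ = ⟪P x (x-y), P x (x-y)⟫ := by
            conv_lhs => rw [← hPP]
            exact (hsym (x-y) (P x (x-y))).symm
        _ = ‖P x (x-y)‖^2 := real_inner_self_eq_norm_sq _
    have hPw_le : ‖P x (x-y)‖ ≤ ‖x-y‖ := by
      have hcs : ‖P x (x-y)‖^2 ≤ ‖x-y‖ * ‖P x (x-y)‖ := by
        rw [← ha]; exact real_inner_le_norm _ _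
      nlinarith [norm_nonneg (P x (x-y)), norm_nonneg (x-y)]
    have hinn_le : |⟪x-y, P x (x-y)⟫| ≤ q x := by
      rw [ha, abs_of_nonneg (sq_nonneg _), hqdef]
      exact pow_le_pow_left₀ (norm_nonneg _) hPw_le 2
    rw [Real.norm_eq_abs, hTdef]
    dsimp only
    rw [htr]
    have b1 := hg_bound (q x) (hq0 x)
    have b2 := hgd_bound (q x) (hq0 x)
    have h1 : |g (q x) * 2| ≤ 2*(σ^2)⁻¹ := by
      rw [abs_mul, abs_two]
      linarith [b1]
    have h2 : |2 * gd (q x) * ⟪x-y, P x (x-y)⟫| ≤ 2*(K * (ρ^2)⁻¹ + (σ^2)⁻¹) := by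
      rw [abs_mul, abs_mul, abs_two]
      nlinarith [abs_nonneg (gd (q x)), abs_nonneg (⟪x-y, P x (x-y)⟫ : ℝ), hq0 x,
        mul_le_mul_of_nonneg_left hinn_le (abs_nonneg (gd (q x))), b2]
    calc |g (q x) * 2 + 2 * gd (q x) * ⟪x-y, P x (x-y)⟫|
        ≤ |g (q x) * 2| + |2 * gd (q x) * ⟪x-y, P x (x-y)⟫| := abs_add_le _ _
      _ ≤ 2*(σ^2)⁻¹ + 2*(K * (ρ^2)⁻¹ + (σ^2)⁻¹) := by linarith
  -- integrability of the inner product term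
  have hXbd : ∀ x, ‖X x‖ ≤ (σ^2)⁻¹ * ρ := by
    intro x
    rw [hXdef]
    dsimp only
    rw [norm_smul, Real.norm_eq_abs]
    by_cases hcase : q x ≤ ρ^2
    · have h1 := hg_bound (q x) (hq0 x)
      have h2 : ‖x - y‖ ≤ ρ := by
        have hq : ‖x-y‖^2 ≤ ρ^2 := by rw [hqdef] at hcase; exact hcase
        nlinarith [norm_nonneg (x-y), hρ]
      exact mul_le_mul h1 h2 (norm_nonneg _) (by positivity)
    · have hbig : ρ^2/2 ≤ q x := by linarith
      rw [hgdef]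
      dsimp only
      rw [(hg_zero _ hbig).1, zero_mul, abs_zero, zero_mul]
      positivity
  have hinn_meas : AEStronglyMeasurable (fun x => (⟪X x, H x⟫:ℝ)) μ :=
    (hXC.continuous.aestronglyMeasurable).inner adm.meas_H
  have hinn_int : Integrable (fun x => (⟪X x, H x⟫:ℝ)) μ := by
    apply Integrable.mono (hH1.norm.const_mul ((σ^2)⁻¹ * ρ)) hinn_meas
    filter_upwards with x
    rw [Real.norm_eq_abs]
    calc |(⟪X x, H x⟫:ℝ)| ≤ ‖X x‖ * ‖H x‖ := abs_real_inner_le_norm _ _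
      _ ≤ ((σ^2)⁻¹ * ρ) * ‖H x‖ := mul_le_mul_of_nonneg_right (hXbd x) (norm_nonneg _)
      _ ≤ ‖((σ^2)⁻¹ * ρ) * ‖H x‖‖ := le_abs_self _
  -- the good term and the remainder term
  set F : E3 → ℝ := fun x => 2 * ηf (q x/ρ^2) * (σ^2 * (((q x) + σ^2)^2)⁻¹) with hFdef
  set R : E3 → ℝ := fun x =>
    Set.indicator (ball y ρ) (fun z => 2*K*(ρ^2)⁻¹ + ‖H z‖^2/2) x with hRdef
  have hF_cont : Continuous F := by
    rw [hFdef]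
    exact (continuous_const.mul (hηf_cont.comp (hq_cont.div_const _))).mul
      (continuous_const.mul (Continuous.inv₀ ((hq_cont.add continuous_const).pow 2)
        (fun x => pow_ne_zero 2 (hden _ (hq0 x)))))
  have hF_nonneg : ∀ x, 0 ≤ F x := by
    intro x
    rw [hFdef]
    dsimp only
    have h1 : (0:ℝ) ≤ 2 * ηf (q x/ρ^2) := by
      have := ηf_nonneg (q x/ρ^2); linarith
    have h2 : (0:ℝ) ≤ σ^2 * (((q x) + σ^2)^2)⁻¹ := by positivity
    exact mul_nonneg h1 h2
  have hF_int : Integrable F μ := by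
    apply Integrable.mono' (integrable_const (2 * (σ^2)⁻¹)) hF_cont.aestronglyMeasurable
    filter_upwards with x
    rw [Real.norm_eq_abs, abs_of_nonneg (hF_nonneg x), hFdef]
    dsimp only
    have h1 : ((q x + σ^2)^2)⁻¹ ≤ (σ^2 * σ^2)⁻¹ := by
      apply inv_anti₀ (by positivity)
      nlinarith [hq0 x]
    have h2 : σ^2 * ((q x + σ^2)^2)⁻¹ ≤ (σ^2)⁻¹ := by
      have := mul_le_mul_of_nonneg_left h1 (le_of_lt hσ2)
      rw [mul_inv, ← mul_assoc, mul_inv_cancel₀ (ne_of_gt hσ2), one_mul] at this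
      exact this
    nlinarith [ηf_le_one (q x/ρ^2), ηf_nonneg (q x/ρ^2), hσ2,
      mul_pos hσ2 (by positivity : (0:ℝ) < ((q x + σ^2)^2)⁻¹)]
  have hR_int : Integrable R μ := by
    rw [hRdef]
    exact Integrable.indicator ((integrable_const _).add (hH2.div_const 2)) measurableSet_ball
  -- pointwise a.e. inequality
  have hpt : ∀ᵐ x ∂μ, F x ≤ Tf x + 2 * ⟪X x, H x⟫ + R x := by
    filter_upwards [adm.proj_ae, perp] with x hx hperp
    obtain ⟨hidem, hsym, hrank⟩ := hx
    have htr : LinearMap.trace ℝ E3 ((P x : E3 →ₗ[ℝ] E3)) = 2 :=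
      trace_proj_eq_two _ hidem hrank
    have hPP : P x (P x (x-y)) = P x (x-y) := by
      have := congrArg (fun f => f (x - y)) hidem
      simpa using this
    have ha : ⟪x-y, P x (x-y)⟫ = ‖P x (x-y)‖^2 := by
      calc ⟪x-y, P x (x-y)⟫ = ⟪P x (x-y), P x (x-y)⟫ := by
            conv_lhs => rw [← hPP]
            exact (hsym (x-y) (P x (x-y))).symm
        _ = ‖P x (x-y)‖^2 := real_inner_self_eq_norm_sq _
    have ha0 : 0 ≤ ⟪x-y, P x (x-y)⟫ := by rw [ha]; positivity
    have hb2 : ‖(x-y) - P x (x-y)‖^2 = q x - ⟪x-y, P x (x-y)⟫ := by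
      have hexp := norm_sub_sq_real (x-y) (P x (x-y))
      rw [hexp, ← ha, hqdef]
      ring
    have he0 : ⟪P x (x-y), H x⟫ = 0 := by
      rw [hsym, hperp, inner_zero_right]
    have hebd : -(‖(x-y) - P x (x-y)‖ * ‖H x‖) ≤ ⟪x-y, H x⟫ := by
      have hsplit : (⟪x-y, H x⟫:ℝ) = ⟪(x-y) - P x (x-y), H x⟫ := by
        have h := inner_sub_left (𝕜 := ℝ) (x-y) (P x (x-y)) (H x)
        rw [he0, sub_zero] at h
        exact h.symm
      rw [hsplit]
      have habs := abs_real_inner_le_norm ((x-y) - P x (x-y)) (H x)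
      have := neg_abs_le (⟪(x-y) - P x (x-y), H x⟫ : ℝ)
      linarith
    have hXinner : (⟪X x, H x⟫:ℝ) = g (q x) * ⟪x-y, H x⟫ := by
      rw [hXdef]
      dsimp only
      rw [real_inner_smul_left]
    by_cases hmem : x ∈ ball y ρ
    · have hRx : R x = 2*K*(ρ^2)⁻¹ + ‖H x‖^2/2 := by
        rw [hRdef]
        simp [Set.indicator_of_mem hmem]
      have hu : (⟪x-y, P x (x-y)⟫ + ‖(x-y) - P x (x-y)‖^2 + σ^2) * (q x + σ^2)⁻¹ = 1 := by
        rw [hb2]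
        have : (⟪x-y, P x (x-y)⟫:ℝ) + (q x - ⟪x-y, P x (x-y)⟫) + σ^2 = q x + σ^2 := by ring
        rw [this]
        exact mul_inv_cancel₀ (hden _ (hq0 x))
      have key := arith_key σ ρ (⟪x-y, P x (x-y)⟫) (‖(x-y) - P x (x-y)‖) (⟪x-y, H x⟫)
        (‖H x‖) (ηf (q x/ρ^2)) (ηd (q x/ρ^2)) K ((q x + σ^2)⁻¹)
        hρ ha0 (norm_nonneg _) (norm_nonneg _) (ηf_nonneg _) (ηf_le_one _)
        (by have := abs_ηd_le (q x/ρ^2); rw [hKdef]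
            have := neg_abs_le (ηd (q x/ρ^2)); linarith)
        hK0 hu (by positivity) hebd
      rw [hRx, hTdef, hFdef, hXinner]
      dsimp only
      rw [htr, hgdef, hgddef]
      dsimp only
      have hrw1 : ((q x + σ^2)^2)⁻¹ = ((q x + σ^2)⁻¹)^2 := (inv_pow _ 2).symm
      have hrw2 : (-1:ℝ) / (q x + σ^2)^2 = -(1:ℝ) * ((q x + σ^2)⁻¹)^2 := by
        rw [div_eq_mul_inv, ← inv_pow]
      rw [hrw1, hrw2]
      linarith [key]
    · have hq_ge : ρ^2 ≤ q x := by
        have hdist : ρ ≤ dist x y := by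
          by_contra hc
          exact hmem (Metric.mem_ball.mpr (by linarith))
        have hnorm : ρ ≤ ‖x - y‖ := by rw [← dist_eq_norm]; linarith
        have := pow_le_pow_left₀ (le_of_lt hρ) hnorm 2
        rw [hqdef]; dsimp only; linarith [this]
      have hz := hg_zero (q x) (by linarith)
      have hRx : R x = 0 := by
        rw [hRdef]
        simp [Set.indicator_of_notMem hmem]
      rw [hRx, hTdef, hFdef, hXinner, hgdef, hgddef]
      dsimp only
      rw [hz.1, hz.2]
      ring_nf
      simp
  -- the integral chain
  have hsum_int : Integrable (fun x => Tf x + 2*⟪X x, H x⟫ + R x) μ :=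
    (hTf_int.add (hinn_int.const_mul 2)).add hR_int
  have step2 : ∫ x, F x ∂μ ≤ ∫ x, (Tf x + 2*⟪X x, H x⟫ + R x) ∂μ :=
    integral_mono_ae hF_int hsum_int hpt
  have hsplit : ∫ x, (Tf x + 2*⟪X x, H x⟫ + R x) ∂μ
      = ∫ x, Tf x ∂μ + 2 * ∫ x, ⟪X x, H x⟫ ∂μ + ∫ x, R x ∂μ := by
    have e1 : ∫ x, (Tf x + 2*⟪X x, H x⟫ + R x) ∂μ
        = (∫ x, (Tf x + 2*⟪X x, H x⟫) ∂μ) + ∫ x, R x ∂μ :=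
      integral_add (hTf_int.add (hinn_int.const_mul 2)) hR_int
    have e2 : ∫ x, (Tf x + 2*⟪X x, H x⟫) ∂μ
        = (∫ x, Tf x ∂μ) + ∫ x, (2*⟪X x, H x⟫:ℝ) ∂μ :=
      integral_add hTf_int (hinn_int.const_mul 2)
    have e3 : ∫ x, (2*⟪X x, H x⟫:ℝ) ∂μ = 2 * ∫ x, (⟪X x, H x⟫:ℝ) ∂μ :=
      integral_const_mul 2 _
    rw [e1, e2, e3]
  have hzero : ∫ x, Tf x ∂μ + 2 * ∫ x, ⟪X x, H x⟫ ∂μ = 0 := by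
    rw [hfv]; ring
  have hRval : ∫ x, R x ∂μ
      = (μ (ball y ρ)).toReal * (2*K*(ρ^2)⁻¹) + (∫ x in ball y ρ, ‖H x‖^2 ∂μ)/2 := by
    rw [hRdef]
    dsimp only
    rw [integral_indicator measurableSet_ball]
    have e1 : ∫ x in ball y ρ, (2*K*(ρ^2)⁻¹ + ‖H x‖^2/2) ∂μ
        = (∫ _x in ball y ρ, (2*K*(ρ^2)⁻¹ : ℝ) ∂μ) + ∫ x in ball y ρ, (‖H x‖^2/2 : ℝ) ∂μ :=
      integral_add (integrable_const _) ((hH2.restrict).div_const 2)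
    rw [e1, setIntegral_const, smul_eq_mul, integral_div]
    rfl
  have step1 : (μ (ball y σ)).toReal * (2*σ^2)⁻¹ ≤ ∫ x, F x ∂μ := by
    have hind : Integrable (Set.indicator (ball y σ) (fun _ => (2*σ^2)⁻¹)) μ :=
      (integrable_const _).indicator measurableSet_ball
    have hmono : ∀ x, Set.indicator (ball y σ) (fun _ => (2*σ^2)⁻¹) x ≤ F x := by
      intro x
      by_cases hx : x ∈ ball y σ
      · rw [Set.indicator_of_mem hx]
        have hqx : q x < σ^2 := by
          have hd : dist x y < σ := Metric.mem_ball.mp hx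
          have hn : ‖x - y‖ < σ := by rw [← dist_eq_norm]; exact hd
          rw [hqdef]
          dsimp only
          nlinarith [norm_nonneg (x-y)]
        have hσρ2 : σ^2 ≤ ρ^2/4 := by nlinarith
        have hη1 : ηf (q x/ρ^2) = 1 := by
          apply ηf_eq_one
          rw [div_le_iff₀ hρ2]
          linarith
        rw [hFdef]
        dsimp only
        rw [hη1, mul_one]
        have h1 : (q x + σ^2)^2 ≤ 4*(σ^2*σ^2) := by nlinarith [hq0 x]
        have h2 : (4*(σ^2*σ^2))⁻¹ ≤ ((q x + σ^2)^2)⁻¹ :=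
          inv_anti₀ (by positivity) h1
        have h3 : (2*σ^2)⁻¹ = 2 * (σ^2 * (4*(σ^2*σ^2))⁻¹) := by
          field_simp
          ring
        rw [h3]
        nlinarith [mul_le_mul_of_nonneg_left h2 (le_of_lt hσ2)]
      · rw [Set.indicator_of_notMem hx]
        exact hF_nonneg x
    calc (μ (ball y σ)).toReal * (2*σ^2)⁻¹
        = ∫ x, Set.indicator (ball y σ) (fun _ => (2*σ^2)⁻¹) x ∂μ := by
          rw [integral_indicator_const _ measurableSet_ball, smul_eq_mul]
          rfl
      _ ≤ ∫ x, F x ∂μ := integral_mono hind hF_int hmono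
  -- put everything together
  have final : (μ (ball y σ)).toReal * (2*σ^2)⁻¹
      ≤ (μ (ball y ρ)).toReal * (2*K*(ρ^2)⁻¹) + (∫ x in ball y ρ, ‖H x‖^2 ∂μ)/2 := by
    have h2 := step2
    rw [hsplit, hRval] at h2
    linarith [step1, h2, hzero]
  rw [div_eq_mul_inv, div_eq_mul_inv]
  rw [hKdef] at final
  ring_nf at final ⊢
  linarith [final]

/-- Equation (1.7) of the paper. There is a universal constant `C > 0` such that
for any admissible triple with perpendicular mean curvature and any point `y` of lower density
at least `π`, one has `π ≤ C (μ(B_ρ(y))/ρ² + ∫_{B_ρ(y)} |H|² dμ)` for all `ρ > 0`. -/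
theorem density_lower_bound :
    ∃ C > (0 : ℝ), ∀ (μ : Measure E3) (P : E3 → E3 →L[ℝ] E3) (H : E3 → E3),
      IsAdmissible μ P H → IsPerp μ P H →
      ∀ y : E3,
        Real.pi ≤ Filter.liminf (fun σ : ℝ => (μ (ball y σ)).toReal / σ ^ 2)
          (nhdsWithin 0 (Set.Ioi 0)) →
        ∀ ρ > (0 : ℝ),
          Real.pi ≤ C * ((μ (ball y ρ)).toReal / ρ ^ 2 + ∫ x in ball y ρ, ‖H x‖ ^ 2 ∂μ) := by
  have hM := transM_nonneg
  refine ⟨16*transM + 1, by linarith, ?_⟩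
  intro μ P H adm perp y hy ρ hρ
  haveI : IsFiniteMeasure μ := adm.finite
  set m := (μ (ball y ρ)).toReal / ρ ^ 2 with hm
  set W := ∫ x in ball y ρ, ‖H x‖ ^ 2 ∂μ with hW
  have hm0 : 0 ≤ m := by
    rw [hm]
    exact div_nonneg ENNReal.toReal_nonneg (sq_nonneg _)
  have hW0 : 0 ≤ W := by
    rw [hW]
    exact setIntegral_nonneg measurableSet_ball (fun x _ => sq_nonneg _)
  have hfreq : ∃ᶠ σ in nhdsWithin (0:ℝ) (Set.Ioi 0),
      (μ (ball y σ)).toReal / σ^2 ≤ 16*transM*m + W := by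
    apply Filter.Eventually.frequently
    filter_upwards [Ioo_mem_nhdsGT (half_pos hρ)] with σ hσ
    have := main_estimate μ P H adm perp y hρ hσ.1 (le_of_lt hσ.2)
    rw [← hm, ← hW] at this
    linarith [this]
  have hcobdd : IsBoundedUnder (· ≥ ·) (nhdsWithin (0:ℝ) (Set.Ioi 0))
      (fun σ : ℝ => (μ (ball y σ)).toReal / σ^2) :=
    isBoundedUnder_of ⟨0, fun σ => div_nonneg ENNReal.toReal_nonneg (sq_nonneg σ)⟩
  have hlim := liminf_le_of_frequently_le hfreq hcobdd
  have hπ : Real.pi ≤ 16*transM*m + W := le_trans hy hlim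
  have hprod : 0 ≤ transM * W := mul_nonneg hM hW0
  nlinarith [hπ, hm0, hprod]

end
end

section
/- Let (μ, P, H) be an admissible triple in ℝ³ with μ ≠ 0, and let d = diam(supp μ) be the diameter of its support. Then μ(ℝ³) ≤ d² · ∫ |H|² dμ. Equivalently, √(μ(ℝ³)/W(μ)) ≤ diam(supp μ), where W(μ) = ∫ |H|² dμ. -/
open MeasureTheory Metric Filter
open scoped RealInnerProductSpace ENNReal

noncomputable section

/-- the lower diameter bound in Simon's lemma: for a nonzero admissible triple,
`μ(ℝ³) ≤ (diam supp μ)² ∫ |H|² dμ`, i.e. `√(μ(ℝ³)/W(μ)) ≤ diam(supp μ)`. -/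
theorem mass_le_diam_sq_mul_willmore (μ : Measure E3) (P : E3 → E3 →L[ℝ] E3) (H : E3 → E3)
    (hadm : IsAdmissible μ P H) (hμ : μ ≠ 0) :
    Mass μ ≤ (diam (mSupport μ)) ^ 2 * Willmore μ H := by
  haveI := hadm.finite
  set K := mSupport μ with hKdef
  -- μ-a.e. point lies in the support
  have hKc : μ Kᶜ = 0 := by
    apply measure_null_of_locally_null
    intro x hx
    simp only [hKdef, mSupport, Set.mem_compl_iff, Set.mem_setOf_eq, not_forall] at hx
    obtain ⟨r, hr, hzero⟩ := hx
    refine ⟨ball x r, mem_nhdsWithin_of_mem_nhds (ball_mem_nhds x hr), ?_⟩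
    simpa [le_zero_iff] using not_lt.mp hzero
  have hae : ∀ᵐ x ∂μ, x ∈ K := by
    rw [MeasureTheory.ae_iff]
    exact hKc
  -- the support is nonempty
  have hKne : K.Nonempty := by
    by_contra hne
    rw [Set.not_nonempty_iff_eq_empty] at hne
    apply hμ
    have : μ Set.univ = 0 := by
      have : (Kᶜ : Set E3) = Set.univ := by simp [hne]
      rw [← this]; exact hKc
    exact Measure.measure_univ_eq_zero.mp this
  obtain ⟨x₀, hx₀⟩ := hKne
  set d := diam K with hd
  have hd0 : 0 ≤ d := diam_nonneg
  have hKb : Bornology.IsBounded K := hadm.compact_support.isBounded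
  -- support lies in a ball
  have hKball : ∀ x ∈ K, dist x x₀ ≤ d := fun x hx => dist_le_diam_of_mem hKb hx hx₀
  -- a smooth cutoff
  set R : ℝ := d + 1 with hR
  have hRpos : 0 < R := by positivity
  let f : ContDiffBump x₀ := ⟨R, R + 1, hRpos, by linarith⟩
  set X : E3 → E3 := fun x => f x • (x - x₀) with hX
  have hXc1 : ContDiff ℝ 1 X :=
    (f.contDiff.smul (contDiff_id.sub contDiff_const)).of_le (by exact_mod_cast le_top)
  have hXcs : HasCompactSupport X := f.hasCompactSupport.smul_right
  -- the derivative of X is the identity on the ball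
  have hfder : ∀ x ∈ ball x₀ R, fderiv ℝ X x = ContinuousLinearMap.id ℝ E3 := by
    intro x hx
    have hXeq : X =ᶠ[nhds x] fun y => y - x₀ := by
      filter_upwards [isOpen_ball.mem_nhds hx] with y hy
      rw [hX]
      simp only
      rw [f.one_of_mem_closedBall (ball_subset_closedBall hy), one_smul]
    rw [hXeq.fderiv_eq, fderiv_sub_const, fderiv_id']
  -- X equals x - x₀ on the support
  have hXval : ∀ x ∈ K, X x = x - x₀ := by
    intro x hx
    have : x ∈ closedBall x₀ R := by
      rw [mem_closedBall]
      have := hKball x hx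
      linarith
    rw [hX]
    simp only
    rw [f.one_of_mem_closedBall this, one_smul]
  -- trace of the integrand is a.e. equal to 2
  have htrace : ∀ᵐ x ∂μ,
      LinearMap.trace ℝ E3 ((P x).comp (fderiv ℝ X x) : E3 →ₗ[ℝ] E3) = 2 := by
    filter_upwards [hadm.proj_ae, hae] with x hx hxK
    obtain ⟨hidem, _hsymm, hrank⟩ := hx
    have hxball : x ∈ ball x₀ R := by
      rw [mem_ball]
      have := hKball x hxK
      linarith
    rw [hfder x hxball, ContinuousLinearMap.comp_id]
    have hproj : LinearMap.IsProj (LinearMap.range ((P x : E3 →ₗ[ℝ] E3)))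
        ((P x : E3 →ₗ[ℝ] E3)) := by
      constructor
      · intro y; exact LinearMap.mem_range_self _ y
      · rintro y ⟨z, rfl⟩
        have := ContinuousLinearMap.ext_iff.mp hidem z
        simpa using this
    rw [hproj.trace, hrank]
    norm_num
  -- the first variation applied to X
  have hFV := hadm.first_variation X hXc1 hXcs
  have hL : ∫ x, LinearMap.trace ℝ E3 ((P x).comp (fderiv ℝ X x) : E3 →ₗ[ℝ] E3) ∂μ
      = 2 * Mass μ := by
    rw [integral_congr_ae htrace, integral_const]
    simp [Mass, mul_comm, measureReal_def]
  have hMass : Mass μ = ∫ x, -⟪X x, H x⟫ ∂μ := by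
    rw [integral_neg]
    rw [hL] at hFV
    linarith
  -- integrability facts
  have hHint : Integrable H μ := hadm.memL2.integrable one_le_two
  have hHsq : Integrable (fun x => ‖H x‖ ^ 2) μ := hadm.memL2.norm.integrable_sq
  obtain ⟨C, hC⟩ := hXcs.exists_bound_of_continuous hXc1.continuous
  have hXHmeas : AEStronglyMeasurable (fun x => ⟪X x, H x⟫) μ :=
    AEStronglyMeasurable.inner hXc1.continuous.aestronglyMeasurable hadm.meas_H
  have hXHint : Integrable (fun x => ⟪X x, H x⟫) μ := by
    refine (hHint.norm.const_mul C).mono' hXHmeas ?_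
    filter_upwards with x
    calc ‖⟪X x, H x⟫‖ = |⟪X x, H x⟫| := rfl
      _ ≤ ‖X x‖ * ‖H x‖ := abs_real_inner_le_norm _ _
      _ ≤ C * ‖H x‖ := by
          apply mul_le_mul_of_nonneg_right (hC x) (norm_nonneg _)
  have hg2int : Integrable (fun x => (1 + d ^ 2 * ‖H x‖ ^ 2) / 2) μ := by
    exact ((integrable_const (1 : ℝ)).add (hHsq.const_mul (d ^ 2))).div_const 2
  -- the pointwise bound
  have hbound : ∀ᵐ x ∂μ, -⟪X x, H x⟫ ≤ (1 + d ^ 2 * ‖H x‖ ^ 2) / 2 := by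
    filter_upwards [hae] with x hxK
    have h1 : -⟪X x, H x⟫ ≤ ‖X x‖ * ‖H x‖ := by
      have := abs_real_inner_le_norm (X x) (H x)
      have h2 := neg_le_abs (⟪X x, H x⟫)
      linarith [neg_abs_le (⟪X x, H x⟫)]
    have h3 : ‖X x‖ ≤ d := by
      rw [hXval x hxK, ← dist_eq_norm]
      exact hKball x hxK
    have h4 : ‖X x‖ * ‖H x‖ ≤ d * ‖H x‖ :=
      mul_le_mul_of_nonneg_right h3 (norm_nonneg _)
    nlinarith [sq_nonneg (d * ‖H x‖ - 1), norm_nonneg (H x)]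
  -- integrate the bound
  have hint : Mass μ ≤ (Mass μ + d ^ 2 * Willmore μ H) / 2 := by
    calc Mass μ = ∫ x, -⟪X x, H x⟫ ∂μ := hMass
      _ ≤ ∫ x, (1 + d ^ 2 * ‖H x‖ ^ 2) / 2 ∂μ :=
          integral_mono_ae hXHint.neg hg2int hbound
      _ = (Mass μ + d ^ 2 * Willmore μ H) / 2 := by
          rw [integral_div]
          congr 1
          rw [integral_add (integrable_const 1) (hHsq.const_mul (d ^ 2)),
            integral_const, integral_const_mul]
          simp [Mass, Willmore, measureReal_def]
  linarith

end
end

section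
/- There exists a constant C > 0, independent of all the data, with the following property. Let (μ, P, H) be an admissible triple in ℝ³ with μ ≠ 0, with H perpendicular, whose support supp μ is compact and connected, and such that liminf_{σ→0} μ(B_σ(y))/σ² ≥ π for every y ∈ supp μ. Then diam(supp μ) ≤ C √( μ(ℝ³) · ∫ |H|² dμ ). -/
open MeasureTheory Metric Filter
open scoped RealInnerProductSpace ENNReal

noncomputable section

/-- The C¹ function `s ↦ (max s 0)²`. -/
def qf : ℝ → ℝ := fun s => (max s 0) ^ 2

lemma qf_nonneg (s : ℝ) : 0 ≤ qf s := sq_nonneg _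

lemma qf_of_nonpos {s : ℝ} (h : s ≤ 0) : qf s = 0 := by
  simp [qf, max_eq_right h]

lemma qf_of_nonneg {s : ℝ} (h : 0 ≤ s) : qf s = s ^ 2 := by
  simp [qf, max_eq_left h]

lemma qf_hasDerivAt (t : ℝ) : HasDerivAt qf (2 * max t 0) t := by
  rcases lt_trichotomy t 0 with ht | rfl | ht
  · have h : HasDerivAt (fun _ : ℝ => (0:ℝ)) 0 t := hasDerivAt_const t 0
    have : qf =ᶠ[nhds t] fun _ => (0:ℝ) := by
      filter_upwards [Iio_mem_nhds ht] with s hs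
      exact qf_of_nonpos (le_of_lt hs)
    have h2 := h.congr_of_eventuallyEq this
    simpa [max_eq_right ht.le] using h2
  · rw [hasDerivAt_iff_isLittleO]
    simp only [max_self, mul_zero, smul_zero, sub_zero]
    have : qf 0 = 0 := by simp [qf]
    rw [this]
    rw [Asymptotics.isLittleO_iff]
    intro c hc
    filter_upwards [Metric.ball_mem_nhds (0:ℝ) hc] with s hs
    simp only [Metric.mem_ball, Real.dist_eq, sub_zero] at hs
    have h1 : |qf s| ≤ s ^ 2 := by
      rw [abs_of_nonneg (qf_nonneg s)]
      rcases le_or_gt s 0 with h | h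
      · rw [qf_of_nonpos h]; positivity
      · rw [qf_of_nonneg h.le]
    calc ‖qf s - 0‖ = |qf s| := by simp
      _ ≤ s ^ 2 := h1
      _ = |s| * |s| := by rw [← abs_mul, sq, abs_of_nonneg (mul_self_nonneg s)]
      _ ≤ c * ‖s‖ := by
          rw [Real.norm_eq_abs]
          exact mul_le_mul_of_nonneg_right hs.le (abs_nonneg s)
  · have h : HasDerivAt (fun s : ℝ => s ^ 2) (2 * t) t := by
      simpa using hasDerivAt_pow 2 t
    have : qf =ᶠ[nhds t] fun s => s ^ 2 := by
      filter_upwards [Ioi_mem_nhds ht] with s hs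
      exact qf_of_nonneg (le_of_lt hs)
    have h2 := h.congr_of_eventuallyEq this
    simpa [max_eq_left ht.le] using h2

lemma qf_contDiff : ContDiff ℝ 1 qf := by
  rw [contDiff_one_iff_deriv]
  constructor
  · exact fun t => (qf_hasDerivAt t).differentiableAt
  · have : deriv qf = fun t => 2 * max t 0 := funext fun t => (qf_hasDerivAt t).deriv
    rw [this]
    exact continuous_const.mul (continuous_id.max continuous_const)

/-- Trace of a rank-one map. -/
lemma trace_smulRight (L : E3 →L[ℝ] ℝ) (z : E3) :
    LinearMap.trace ℝ E3 ((L.smulRight z : E3 →L[ℝ] E3) : E3 →ₗ[ℝ] E3) = L z := by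
  have h : ((L.smulRight z : E3 →L[ℝ] E3) : E3 →ₗ[ℝ] E3)
      = dualTensorHom ℝ E3 E3 ((L : E3 →ₗ[ℝ] ℝ) ⊗ₜ z) := by
    ext w
    simp [dualTensorHom_apply]
  rw [h, LinearMap.trace_eq_contract_apply, contractLeft_apply]
  rfl

/-- Trace of an idempotent rank-2 continuous linear map on `E3` is `2`. -/
lemma trace_proj (Pc : E3 →L[ℝ] E3) (hid : Pc.comp Pc = Pc)
    (hrk : Module.finrank ℝ (LinearMap.range ((Pc : E3 →ₗ[ℝ] E3))) = 2) :
    LinearMap.trace ℝ E3 (Pc : E3 →ₗ[ℝ] E3) = 2 := by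
  have hproj : LinearMap.IsProj (LinearMap.range ((Pc : E3 →ₗ[ℝ] E3))) (Pc : E3 →ₗ[ℝ] E3) := by
    constructor
    · intro x; exact LinearMap.mem_range_self _ x
    · rintro x ⟨w, rfl⟩
      have := congrArg (fun T => T w) hid
      simpa using this
  rw [hproj.trace, hrk]
  norm_num

/-- The key trace computation for the test field's derivative. -/
lemma trace_comp_formula (Pc : E3 →L[ℝ] E3) (hid : Pc.comp Pc = Pc)
    (hrk : Module.finrank ℝ (LinearMap.range ((Pc : E3 →ₗ[ℝ] E3))) = 2)
    (c : ℝ) (L : E3 →L[ℝ] ℝ) (z : E3) :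
    LinearMap.trace ℝ E3
      ((Pc.comp (c • ContinuousLinearMap.id ℝ E3 + L.smulRight z)) : E3 →ₗ[ℝ] E3)
      = 2 * c + L (Pc z) := by
  have h1 : Pc.comp (c • ContinuousLinearMap.id ℝ E3 + L.smulRight z)
      = c • Pc + L.smulRight (Pc z) := by
    ext w
    simp
  rw [h1]
  have h2 : (((c • Pc + L.smulRight (Pc z)) : E3 →L[ℝ] E3) : E3 →ₗ[ℝ] E3)
      = c • (Pc : E3 →ₗ[ℝ] E3) + ((L.smulRight (Pc z) : E3 →L[ℝ] E3) : E3 →ₗ[ℝ] E3) := by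
    rfl
  rw [h2, map_add, _root_.map_smul, trace_proj Pc hid hrk, trace_smulRight]
  rw [smul_eq_mul]
  simp [mul_comm]


/-- Squared distance to `y`, written with the inner product. -/
def tf (y : E3) (x : E3) : ℝ := ⟪x - y, x - y⟫

/-- One-dimensional profile of the test function. -/
def hf1d (σ ρ : ℝ) (t : ℝ) : ℝ :=
  (qf (ρ ^ 2 * (t + σ ^ 2)⁻¹ - 2) - qf (ρ ^ 2 * (t + σ ^ 2)⁻¹ - 4)) / (4 * ρ ^ 2)

def Ff (y : E3) (σ ρ : ℝ) (x : E3) : ℝ := hf1d σ ρ (tf y x)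

/-- The test vector field. -/
def Xf (y : E3) (σ ρ : ℝ) (x : E3) : E3 := Ff y σ ρ x • (x - y)

def uf (y : E3) (σ : ℝ) (x : E3) : ℝ := (tf y x + σ ^ 2)⁻¹

def vf (y : E3) (σ ρ : ℝ) (x : E3) : ℝ := ρ ^ 2 * uf y σ x

def ccf (y : E3) (σ ρ : ℝ) (x : E3) : ℝ :=
  (max (vf y σ ρ x - 2) 0 - max (vf y σ ρ x - 4) 0) * (uf y σ x) ^ 2

def Sf (y : E3) (σ ρ : ℝ) (x : E3) : ℝ := 2 * Ff y σ ρ x - ccf y σ ρ x * tf y x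

lemma tf_nonneg (y x : E3) : 0 ≤ tf y x := real_inner_self_nonneg

lemma tf_eq_norm (y x : E3) : tf y x = ‖x - y‖ ^ 2 := real_inner_self_eq_norm_sq _

lemma tf_eq_dist (y x : E3) : tf y x = dist x y ^ 2 := by
  rw [tf_eq_norm, dist_eq_norm]

lemma denom_pos (y : E3) {σ : ℝ} (hσ : 0 < σ) (x : E3) : 0 < tf y x + σ ^ 2 :=
  add_pos_of_nonneg_of_pos (tf_nonneg y x) (by positivity)

lemma uf_pos (y : E3) {σ : ℝ} (hσ : 0 < σ) (x : E3) : 0 < uf y σ x :=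
  inv_pos.mpr (denom_pos y hσ x)

lemma hasFDerivAt_Xf (y : E3) {σ ρ : ℝ} (hσ : 0 < σ) (hρ : 0 < ρ) (x : E3) :
    HasFDerivAt (Xf y σ ρ)
      ((Ff y σ ρ x) • ContinuousLinearMap.id ℝ E3
        + ((-(ccf y σ ρ x)) • (innerSL ℝ (x - y) : E3 →L[ℝ] ℝ)).smulRight (x - y)) x := by
  have hden : tf y x + σ ^ 2 ≠ 0 := ne_of_gt (denom_pos y hσ x)
  have hsub : HasFDerivAt (fun x : E3 => x - y) (ContinuousLinearMap.id ℝ E3) x :=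
    (hasFDerivAt_id x).sub_const y
  have htf : HasFDerivAt (tf y)
      ((fderivInnerCLM ℝ (x - y, x - y)).comp
        ((ContinuousLinearMap.id ℝ E3).prod (ContinuousLinearMap.id ℝ E3))) x :=
    HasFDerivAt.inner ℝ hsub hsub
  have h1 : HasDerivAt (fun t : ℝ => t + σ ^ 2) 1 (tf y x) := (hasDerivAt_id _).add_const _
  have h2 : HasDerivAt (fun t : ℝ => (t + σ ^ 2)⁻¹)
      (-1 / (tf y x + σ ^ 2) ^ 2) (tf y x) := h1.inv hden
  have h3 : HasDerivAt (fun t : ℝ => ρ ^ 2 * (t + σ ^ 2)⁻¹)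
      (ρ ^ 2 * (-1 / (tf y x + σ ^ 2) ^ 2)) (tf y x) := h2.const_mul _
  have h3a : HasDerivAt (fun t : ℝ => ρ ^ 2 * (t + σ ^ 2)⁻¹ - 2)
      (ρ ^ 2 * (-1 / (tf y x + σ ^ 2) ^ 2)) (tf y x) := h3.sub_const 2
  have h3b : HasDerivAt (fun t : ℝ => ρ ^ 2 * (t + σ ^ 2)⁻¹ - 4)
      (ρ ^ 2 * (-1 / (tf y x + σ ^ 2) ^ 2)) (tf y x) := h3.sub_const 4
  have h4a : HasDerivAt (fun t : ℝ => qf (ρ ^ 2 * (t + σ ^ 2)⁻¹ - 2))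
      ((2 * max (ρ ^ 2 * (tf y x + σ ^ 2)⁻¹ - 2) 0) *
        (ρ ^ 2 * (-1 / (tf y x + σ ^ 2) ^ 2))) (tf y x) :=
    (qf_hasDerivAt _).comp _ h3a
  have h4b : HasDerivAt (fun t : ℝ => qf (ρ ^ 2 * (t + σ ^ 2)⁻¹ - 4))
      ((2 * max (ρ ^ 2 * (tf y x + σ ^ 2)⁻¹ - 4) 0) *
        (ρ ^ 2 * (-1 / (tf y x + σ ^ 2) ^ 2))) (tf y x) :=
    (qf_hasDerivAt _).comp _ h3b
  have h5 : HasDerivAt (hf1d σ ρ)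
      (((2 * max (ρ ^ 2 * (tf y x + σ ^ 2)⁻¹ - 2) 0) *
        (ρ ^ 2 * (-1 / (tf y x + σ ^ 2) ^ 2)) -
        (2 * max (ρ ^ 2 * (tf y x + σ ^ 2)⁻¹ - 4) 0) *
        (ρ ^ 2 * (-1 / (tf y x + σ ^ 2) ^ 2))) / (4 * ρ ^ 2)) (tf y x) :=
    (h4a.sub h4b).div_const _
  have hφ : HasFDerivAt (Ff y σ ρ)
      ((((2 * max (ρ ^ 2 * (tf y x + σ ^ 2)⁻¹ - 2) 0) *
        (ρ ^ 2 * (-1 / (tf y x + σ ^ 2) ^ 2)) -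
        (2 * max (ρ ^ 2 * (tf y x + σ ^ 2)⁻¹ - 4) 0) *
        (ρ ^ 2 * (-1 / (tf y x + σ ^ 2) ^ 2))) / (4 * ρ ^ 2)) •
        ((fderivInnerCLM ℝ (x - y, x - y)).comp
          ((ContinuousLinearMap.id ℝ E3).prod (ContinuousLinearMap.id ℝ E3)))) x :=
    h5.comp_hasFDerivAt x htf
  have hX := hφ.smul hsub
  have hEq : (Ff y σ ρ x) • ContinuousLinearMap.id ℝ E3
        + ((-(ccf y σ ρ x)) • (innerSL ℝ (x - y) : E3 →L[ℝ] ℝ)).smulRight (x - y)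
      = Ff y σ ρ x • ContinuousLinearMap.id ℝ E3 +
        (((((2 * max (ρ ^ 2 * (tf y x + σ ^ 2)⁻¹ - 2) 0) *
        (ρ ^ 2 * (-1 / (tf y x + σ ^ 2) ^ 2)) -
        (2 * max (ρ ^ 2 * (tf y x + σ ^ 2)⁻¹ - 4) 0) *
        (ρ ^ 2 * (-1 / (tf y x + σ ^ 2) ^ 2))) / (4 * ρ ^ 2)) •
        ((fderivInnerCLM ℝ (x - y, x - y)).comp
          ((ContinuousLinearMap.id ℝ E3).prod
            (ContinuousLinearMap.id ℝ E3)))).smulRight (x - y)) := by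
    congr 1
    refine ContinuousLinearMap.ext fun w => ?_
    simp only [ContinuousLinearMap.smulRight_apply, ContinuousLinearMap.coe_smul',
      Pi.smul_apply, innerSL_apply_apply, ContinuousLinearMap.coe_comp', Function.comp_apply,
      ContinuousLinearMap.prod_apply, ContinuousLinearMap.coe_id', id_eq,
      fderivInnerCLM_apply, smul_eq_mul]
    rw [real_inner_comm w (x - y)]
    congr 1
    unfold ccf vf uf
    field_simp
    ring
  rw [hEq]
  exact hX

lemma contDiff_Xf (y : E3) {σ ρ : ℝ} (hσ : 0 < σ) : ContDiff ℝ 1 (Xf y σ ρ) := by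
  have hden : ∀ x : E3, tf y x + σ ^ 2 ≠ 0 := fun x => ne_of_gt (denom_pos y hσ x)
  have hsub : ContDiff ℝ 1 (fun x : E3 => x - y) := contDiff_id.sub contDiff_const
  have htf : ContDiff ℝ 1 (tf y) := ContDiff.inner ℝ hsub hsub
  have hinv : ContDiff ℝ 1 (fun x : E3 => (tf y x + σ ^ 2)⁻¹) :=
    (htf.add contDiff_const).inv hden
  have hv : ContDiff ℝ 1 (fun x : E3 => ρ ^ 2 * (tf y x + σ ^ 2)⁻¹) := contDiff_const.mul hinv
  have hF : ContDiff ℝ 1 (Ff y σ ρ) := by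
    unfold Ff hf1d
    exact ((qf_contDiff.comp (hv.sub contDiff_const)).sub
      (qf_contDiff.comp (hv.sub contDiff_const))).div_const _
  exact hF.smul hsub

lemma Ff_zero_far (y : E3) {σ ρ : ℝ} (hσ : 0 < σ) (hρ : 0 < ρ) {x : E3}
    (hx : ρ ≤ dist x y) : Ff y σ ρ x = 0 := by
  have ht : ρ ^ 2 ≤ tf y x := by
    rw [tf_eq_dist]
    exact pow_le_pow_left₀ hρ.le hx 2
  have hv : ρ ^ 2 * (tf y x + σ ^ 2)⁻¹ < 1 := by
    rw [mul_inv_lt_iff₀ (denom_pos y hσ x)]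
    nlinarith [sq_nonneg σ, hσ]
  unfold Ff hf1d
  rw [qf_of_nonpos (by linarith), qf_of_nonpos (by linarith)]
  simp

lemma hasCompactSupport_Xf (y : E3) {σ ρ : ℝ} (hσ : 0 < σ) (hρ : 0 < ρ) :
    HasCompactSupport (Xf y σ ρ) := by
  apply HasCompactSupport.intro (isCompact_closedBall y ρ)
  intro x hx
  simp only [Metric.mem_closedBall, not_le] at hx
  unfold Xf
  rw [Ff_zero_far y hσ hρ hx.le, zero_smul]
lemma uf_le (y : E3) {σ : ℝ} (hσ : 0 < σ) (x : E3) : uf y σ x ≤ 1 / σ ^ 2 := by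
  rw [uf, one_div]
  exact inv_anti₀ (by positivity) (le_add_of_nonneg_left (tf_nonneg y x))

lemma uf_mul_tf_le_one (y : E3) {σ : ℝ} (hσ : 0 < σ) (x : E3) : uf y σ x * tf y x ≤ 1 := by
  have h := denom_pos y hσ x
  rw [uf]
  rw [inv_mul_le_iff₀ h]
  nlinarith [tf_nonneg y x]

lemma uf_inv_eq (y : E3) {σ : ℝ} (hσ : 0 < σ) (x : E3) :
    uf y σ x * (tf y x + σ ^ 2) = 1 :=
  inv_mul_cancel₀ (ne_of_gt (denom_pos y hσ x))

lemma mdiff_nonneg (v : ℝ) : 0 ≤ max (v - 2) 0 - max (v - 4) 0 := by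
  rcases le_or_gt v 4 with h | h
  · have : max (v - 4) 0 = 0 := max_eq_right (by linarith)
    rw [this]
    simp [le_max_iff]
  · rw [max_eq_left (by linarith : (0:ℝ) ≤ v - 2), max_eq_left (by linarith : (0:ℝ) ≤ v - 4)]
    linarith

lemma mdiff_le_two (v : ℝ) : max (v - 2) 0 - max (v - 4) 0 ≤ 2 := by
  rcases le_or_gt v 2 with h | h
  · rw [max_eq_right (by linarith : v - 2 ≤ 0)]
    nlinarith [le_max_right (v - 4) (0:ℝ)]
  · rcases le_or_gt v 4 with h4 | h4
    · rw [max_eq_left (by linarith : (0:ℝ) ≤ v - 2), max_eq_right (by linarith : v - 4 ≤ 0)]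
      linarith
    · rw [max_eq_left (by linarith : (0:ℝ) ≤ v - 2), max_eq_left (by linarith : (0:ℝ) ≤ v - 4)]
      linarith

lemma qf_diff_ge (v : ℝ) : 4 * (v - 3) ≤ qf (v - 2) - qf (v - 4) := by
  rcases le_or_gt v 2 with h | h
  · rw [qf_of_nonpos (by linarith), qf_of_nonpos (by linarith)]
    linarith
  · rcases le_or_gt v 4 with h4 | h4
    · rw [qf_of_nonneg (by linarith), qf_of_nonpos (by linarith)]
      nlinarith [sq_nonneg (v - 4)]
    · rw [qf_of_nonneg (by linarith), qf_of_nonneg (by linarith)]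
      ring_nf
      nlinarith

lemma qf_diff_nonneg (v : ℝ) : 0 ≤ qf (v - 2) - qf (v - 4) := by
  rcases le_or_gt v 2 with h | h
  · rw [qf_of_nonpos (by linarith), qf_of_nonpos (by linarith)]; norm_num
  · rcases le_or_gt v 4 with h4 | h4
    · rw [qf_of_nonneg (by linarith), qf_of_nonpos (by linarith)]
      nlinarith
    · rw [qf_of_nonneg (by linarith), qf_of_nonneg (by linarith)]
      nlinarith

lemma qf_diff_le (v : ℝ) (hv : 0 ≤ v) : qf (v - 2) - qf (v - 4) ≤ v ^ 2 := by
  have h4 : 0 ≤ qf (v - 4) := qf_nonneg _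
  rcases le_or_gt v 2 with h | h
  · rw [qf_of_nonpos (by linarith)]
    nlinarith
  · rw [qf_of_nonneg (by linarith : (0:ℝ) ≤ v - 2)]
    nlinarith

lemma Ff_nonneg (y : E3) {σ ρ : ℝ} (hσ : 0 < σ) (hρ : 0 < ρ) (x : E3) : 0 ≤ Ff y σ ρ x := by
  have := qf_diff_nonneg (vf y σ ρ x)
  unfold Ff hf1d
  unfold vf uf at this
  positivity

lemma vf_nonneg (y : E3) {σ ρ : ℝ} (hσ : 0 < σ) (x : E3) : 0 ≤ vf y σ ρ x := by
  have := (uf_pos y hσ x).le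
  unfold vf
  positivity

/-- Claim A : pointwise lower bound for `Sf`. -/
lemma Sf_lower (y : E3) {σ ρ : ℝ} (hσ : 0 < σ) (hσρ : σ ≤ ρ) (x : E3) :
    Set.indicator (ball y σ) (fun _ => 1 / (2 * σ ^ 2)) x
      - Set.indicator (ball y ρ) (fun _ => 6 / ρ ^ 2) x ≤ Sf y σ ρ x := by
  have hρ : 0 < ρ := lt_of_lt_of_le hσ hσρ
  have hu : 0 < uf y σ x := uf_pos y hσ x
  have ht0 : 0 ≤ tf y x := tf_nonneg y x
  have huinv := uf_inv_eq y hσ x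
  by_cases hxρ : x ∈ ball y ρ
  swap
  · -- far away : everything vanishes
    rw [Set.indicator_of_notMem hxρ,
      Set.indicator_of_notMem (fun h => hxρ (ball_subset_ball hσρ h))]
    have hd : ρ ≤ dist x y := not_lt.mp (by simpa [Metric.mem_ball] using hxρ)
    have ht : ρ ^ 2 ≤ tf y x := by
      rw [tf_eq_dist]; exact pow_le_pow_left₀ hρ.le hd 2
    have hv : vf y σ ρ x < 1 := by
      unfold vf uf
      rw [mul_inv_lt_iff₀ (denom_pos y hσ x)]
      nlinarith
    have hv' : vf y σ ρ x < 1 := hv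
    unfold Sf Ff hf1d ccf
    unfold vf uf at hv ⊢
    rw [qf_of_nonpos (by linarith), qf_of_nonpos (by linarith),
      max_eq_right (by linarith), max_eq_right (by linarith)]
    simp
  · -- inside the big ball
    have base : 2 * σ ^ 2 * (uf y σ x) ^ 2 - 6 / ρ ^ 2 ≤ Sf y σ ρ x := by
      have hqd := qf_diff_ge (vf y σ ρ x)
      have hmd := mdiff_le_two (vf y σ ρ x)
      have hvdef : vf y σ ρ x = ρ ^ 2 * uf y σ x := rfl
      have hS : Sf y σ ρ x = (qf (vf y σ ρ x - 2) - qf (vf y σ ρ x - 4)) / (4 * ρ ^ 2)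
          * 2 - (max (vf y σ ρ x - 2) 0 - max (vf y σ ρ x - 4) 0) * (uf y σ x) ^ 2
            * tf y x := by
        unfold Sf Ff hf1d ccf
        unfold vf uf
        ring
      rw [hS]
      have h2F : (2 * (vf y σ ρ x - 3)) / ρ ^ 2 ≤
          (qf (vf y σ ρ x - 2) - qf (vf y σ ρ x - 4)) / (4 * ρ ^ 2) * 2 := by
        rw [div_le_iff₀ (by positivity)]
        have : (qf (vf y σ ρ x - 2) - qf (vf y σ ρ x - 4)) / (4 * ρ ^ 2) * 2 * ρ ^ 2
            = (qf (vf y σ ρ x - 2) - qf (vf y σ ρ x - 4)) / 2 := by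
          field_simp
          ring
        rw [this]
        linarith
      have hcc : (max (vf y σ ρ x - 2) 0 - max (vf y σ ρ x - 4) 0) * (uf y σ x) ^ 2
            * tf y x ≤ 2 * (uf y σ x) ^ 2 * tf y x := by
        have h2 : 0 ≤ (uf y σ x) ^ 2 * tf y x := by positivity
        nlinarith
      have harith : 2 * (vf y σ ρ x - 3) / ρ ^ 2 - 2 * (uf y σ x) ^ 2 * tf y x
          = 2 * σ ^ 2 * (uf y σ x) ^ 2 - 6 / ρ ^ 2
            - 2 * uf y σ x * (uf y σ x * (tf y x + σ ^ 2) - 1) := by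
        rw [hvdef]
        field_simp
        ring
      rw [huinv] at harith
      simp only [sub_self, mul_zero, add_zero] at harith
      linarith
    by_cases hxσ : x ∈ ball y σ
    · rw [Set.indicator_of_mem hxσ, Set.indicator_of_mem hxρ]
      have ht : tf y x < σ ^ 2 := by
        rw [tf_eq_dist]
        have h1 := Metric.mem_ball.mp hxσ
        nlinarith [dist_nonneg (x := x) (y := y)]
      have hub : 1 / (2 * σ ^ 2) ≤ uf y σ x := by
        rw [div_le_iff₀ (by positivity)]
        nlinarith
      have : 1 / (2 * σ ^ 2) ≤ 2 * σ ^ 2 * (uf y σ x) ^ 2 := by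
        have h1 : 1 / (2 * σ ^ 2) * (2 * σ ^ 2) ≤ uf y σ x * (2 * σ ^ 2) := by
          nlinarith
        nlinarith [hub, hu, sq_nonneg (uf y σ x - 1/(2*σ^2))]
      linarith
    · rw [Set.indicator_of_notMem hxσ, Set.indicator_of_mem hxρ]
      nlinarith [sq_nonneg (uf y σ x), sq_nonneg σ]
section Pointwise

variable (y : E3) {σ ρ : ℝ} (x : E3) (Pc : E3 →L[ℝ] E3) (Hx : E3)

/-- Orthogonality identities for a symmetric idempotent `Pc`. -/
lemma perp_sq (hidem : Pc.comp Pc = Pc) (hsym : ∀ u v : E3, ⟪Pc u, v⟫ = ⟪u, Pc v⟫) (z : E3) :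
    ‖z - Pc z‖ ^ 2 = ⟪z, z⟫ - ⟪z, Pc z⟫ := by
  have hPP : Pc (Pc z) = Pc z := by
    have := congrArg (fun T => T z) hidem
    simpa using this
  have h2 : ⟪Pc z, Pc z⟫ = ⟪z, Pc z⟫ := by
    rw [hsym z (Pc z), hPP]
  rw [← real_inner_self_eq_norm_sq]
  rw [inner_sub_left, inner_sub_right, inner_sub_right]
  rw [real_inner_comm (Pc z) z] at *
  rw [hsym z (Pc z)] at *
  rw [hPP] at *
  ring_nf
  rw [h2]
  ring

lemma inner_P_nonneg (hidem : Pc.comp Pc = Pc)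
    (hsym : ∀ u v : E3, ⟪Pc u, v⟫ = ⟪u, Pc v⟫) (z : E3) : 0 ≤ ⟪z, Pc z⟫ := by
  have hPP : Pc (Pc z) = Pc z := by
    have := congrArg (fun T => T z) hidem
    simpa using this
  have h2 : ⟪Pc z, Pc z⟫ = ⟪z, Pc z⟫ := by rw [hsym z (Pc z), hPP]
  rw [← h2]
  exact real_inner_self_nonneg

set_option maxHeartbeats 1000000 in
/-- The pointwise Young / absorption inequality. -/
lemma young_pointwise (hσ : 0 < σ) (hρ : 0 < ρ)
    (hidem : Pc.comp Pc = Pc) (hsym : ∀ u v : E3, ⟪Pc u, v⟫ = ⟪u, Pc v⟫)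
    (hPH : Pc Hx = 0) :
    -2 * (Ff y σ ρ x * ⟪x - y, Hx⟫) - ccf y σ ρ x * (tf y x - ⟪x - y, Pc (x - y)⟫)
      ≤ Set.indicator (ball y ρ) (fun _ => ‖Hx‖ ^ 2 / 2) x := by
  have hu : 0 < uf y σ x := uf_pos y hσ x
  have hQ : tf y x - ⟪x - y, Pc (x - y)⟫ = ‖(x - y) - Pc (x - y)‖ ^ 2 := by
    rw [perp_sq Pc hidem hsym (x - y)]; rfl
  have hip : ⟪x - y, Hx⟫ = ⟪(x - y) - Pc (x - y), Hx⟫ := by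
    have h0 : ⟪Pc (x - y), Hx⟫ = 0 := by rw [hsym (x - y) Hx, hPH, inner_zero_right]
    have h2 : ⟪(x - y) - Pc (x - y), Hx⟫ = ⟪x - y, Hx⟫ - ⟪Pc (x - y), Hx⟫ :=
      inner_sub_left _ _ _
    rw [h2, h0, sub_zero]
  rcases le_or_gt (vf y σ ρ x) 2 with hv2 | hv2
  · -- the test function vanishes
    have hF : Ff y σ ρ x = 0 := by
      have h2 : vf y σ ρ x - 2 ≤ 0 := by linarith
      have h4 : vf y σ ρ x - 4 ≤ 0 := by linarith
      unfold Ff hf1d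
      rw [show ρ ^ 2 * (tf y x + σ ^ 2)⁻¹ - 2 = vf y σ ρ x - 2 from rfl,
        show ρ ^ 2 * (tf y x + σ ^ 2)⁻¹ - 4 = vf y σ ρ x - 4 from rfl,
        qf_of_nonpos h2, qf_of_nonpos h4]
      simp
    have hcc : ccf y σ ρ x = 0 := by
      unfold ccf
      rw [max_eq_right (by linarith), max_eq_right (by linarith)]
      simp
    rw [hF, hcc]
    simp only [mul_zero, zero_mul, sub_zero, neg_zero, mul_zero, zero_sub, neg_zero]
    norm_num
    exact Set.indicator_nonneg (fun z _ => by positivity) x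
  · -- inside the ball; absorption
    have hmem : x ∈ ball y ρ := by
      have hv_eq : vf y σ ρ x * (tf y x + σ ^ 2) = ρ ^ 2 := by
        show ρ ^ 2 * (tf y x + σ ^ 2)⁻¹ * (tf y x + σ ^ 2) = ρ ^ 2
        rw [mul_assoc, inv_mul_cancel₀ (ne_of_gt (denom_pos y hσ x)), mul_one]
      have hineq : tf y x + σ ^ 2 < ρ ^ 2 / 2 := by
        nlinarith [denom_pos y hσ x]
      rw [Metric.mem_ball]
      nlinarith [dist_nonneg (x := x) (y := y), tf_eq_dist y x, sq_nonneg σ]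
    rw [Set.indicator_of_mem hmem]
    have hF0 : 0 ≤ Ff y σ ρ x := Ff_nonneg y hσ hρ x
    have h2F : 2 * (Ff y σ ρ x) ^ 2 ≤ ccf y σ ρ x := by
      have hvdef : vf y σ ρ x = ρ ^ 2 * uf y σ x := rfl
      have hg : (qf (vf y σ ρ x - 2) - qf (vf y σ ρ x - 4)) ^ 2
          ≤ 8 * (max (vf y σ ρ x - 2) 0 - max (vf y σ ρ x - 4) 0) * (vf y σ ρ x) ^ 2 := by
        rcases le_or_gt (vf y σ ρ x) 4 with h4 | h4
        · rw [qf_of_nonneg (by linarith), qf_of_nonpos (by linarith),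
            max_eq_left (by linarith), max_eq_right (by linarith)]
          have e0 : (0:ℝ) ≤ vf y σ ρ x - 2 := by linarith
          have e1 : vf y σ ρ x - 2 ≤ 2 := by linarith
          have h1 : (vf y σ ρ x - 2) ^ 3 ≤ 8 := by
            have := pow_le_pow_left₀ e0 e1 3
            norm_num at this
            linarith
          have h2 : 1 ≤ (vf y σ ρ x) ^ 2 := by nlinarith
          nlinarith [sq_nonneg (vf y σ ρ x - 2), sq_nonneg (vf y σ ρ x)]
        · rw [qf_of_nonneg (by linarith), qf_of_nonneg (by linarith),
            max_eq_left (by linarith), max_eq_left (by linarith)]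
          nlinarith [sq_nonneg (vf y σ ρ x - 3), sq_nonneg (vf y σ ρ x)]
      have hgoal : (qf (vf y σ ρ x - 2) - qf (vf y σ ρ x - 4)) ^ 2
          ≤ 8 * (max (vf y σ ρ x - 2) 0 - max (vf y σ ρ x - 4) 0)
            * (ρ ^ 2) ^ 2 * (uf y σ x) ^ 2 := by
        calc (qf (vf y σ ρ x - 2) - qf (vf y σ ρ x - 4)) ^ 2
            ≤ 8 * (max (vf y σ ρ x - 2) 0 - max (vf y σ ρ x - 4) 0) * (vf y σ ρ x) ^ 2 := hg
          _ = 8 * (max (vf y σ ρ x - 2) 0 - max (vf y σ ρ x - 4) 0)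
              * (ρ ^ 2) ^ 2 * (uf y σ x) ^ 2 := by rw [hvdef]; ring
      have hF_eq : Ff y σ ρ x = (qf (vf y σ ρ x - 2) - qf (vf y σ ρ x - 4)) / (4 * ρ ^ 2) :=
        rfl
      have hcc_eq : ccf y σ ρ x
          = (max (vf y σ ρ x - 2) 0 - max (vf y σ ρ x - 4) 0) * (uf y σ x) ^ 2 := rfl
      rw [hF_eq, hcc_eq, div_pow, ← mul_div_assoc,
        div_le_iff₀ (by positivity : (0:ℝ) < (4 * ρ ^ 2) ^ 2)]
      nlinarith [hgoal]
    have ha0 : (0:ℝ) ≤ ‖(x - y) - Pc (x - y)‖ := norm_nonneg _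
    have hb0 : (0:ℝ) ≤ ‖Hx‖ := norm_nonneg _
    have habs : -(‖(x - y) - Pc (x - y)‖ * ‖Hx‖) ≤ ⟪(x - y) - Pc (x - y), Hx⟫ := by
      have h := abs_real_inner_le_norm ((x - y) - Pc (x - y)) Hx
      have h2 := neg_abs_le ⟪(x - y) - Pc (x - y), Hx⟫
      linarith [neg_le_neg h]
    have key : 2 * Ff y σ ρ x * (‖(x - y) - Pc (x - y)‖ * ‖Hx‖)
        - ccf y σ ρ x * ‖(x - y) - Pc (x - y)‖ ^ 2 ≤ ‖Hx‖ ^ 2 / 2 := by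
      nlinarith [sq_nonneg (‖Hx‖ - 2 * Ff y σ ρ x * ‖(x - y) - Pc (x - y)‖),
        mul_nonneg (sub_nonneg.2 h2F) (sq_nonneg ‖(x - y) - Pc (x - y)‖)]
    have hstep : -2 * (Ff y σ ρ x * ⟪x - y, Hx⟫)
        ≤ 2 * Ff y σ ρ x * (‖(x - y) - Pc (x - y)‖ * ‖Hx‖) := by
      rw [hip]
      have := mul_le_mul_of_nonneg_left habs (by linarith : (0:ℝ) ≤ 2 * Ff y σ ρ x)
      nlinarith [this]
    rw [hQ]
    linarith [key, hstep]

end Pointwise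
section Bounds

variable (y : E3) {σ ρ : ℝ} (x : E3) (Pc : E3 →L[ℝ] E3)

lemma psi_bound (hσ : 0 < σ) (hidem : Pc.comp Pc = Pc)
    (hsym : ∀ u v : E3, ⟪Pc u, v⟫ = ⟪u, Pc v⟫) :
    |ccf y σ ρ x * (tf y x - ⟪x - y, Pc (x - y)⟫)| ≤ 2 / σ ^ 2 := by
  have hu : 0 < uf y σ x := uf_pos y hσ x
  have hut := uf_mul_tf_le_one y hσ x
  have hule := uf_le y hσ x
  have ht0 := tf_nonneg y x
  have hQ := perp_sq Pc hidem hsym (x - y)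
  have h1 : (0:ℝ) ≤ tf y x - ⟪x - y, Pc (x - y)⟫ := by
    have h := sq_nonneg ‖(x - y) - Pc (x - y)‖
    rw [hQ] at h
    exact h
  have hcc0 : 0 ≤ ccf y σ ρ x := mul_nonneg (mdiff_nonneg _) (sq_nonneg _)
  have hcc2 : ccf y σ ρ x ≤ 2 * (uf y σ x) ^ 2 := by
    have := mdiff_le_two (vf y σ ρ x)
    unfold ccf
    nlinarith [sq_nonneg (uf y σ x)]
  rw [abs_of_nonneg (mul_nonneg hcc0 h1)]
  have hip0 : 0 ≤ ⟪x - y, Pc (x - y)⟫ := inner_P_nonneg Pc hidem hsym _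
  have h2 : tf y x - ⟪x - y, Pc (x - y)⟫ ≤ tf y x := by linarith
  have step1 : ccf y σ ρ x * (tf y x - ⟪x - y, Pc (x - y)⟫) ≤ 2 * (uf y σ x) ^ 2 * tf y x := by
    nlinarith [mul_le_mul_of_nonneg_right hcc2 h1,
      mul_le_mul_of_nonneg_left h2 (by positivity : (0:ℝ) ≤ 2 * (uf y σ x) ^ 2)]
  have step2 : 2 * (uf y σ x) ^ 2 * tf y x ≤ 2 * uf y σ x := by
    have h3 := mul_le_mul_of_nonneg_left hut (le_of_lt hu)
    nlinarith
  have step3 : 2 * uf y σ x ≤ 2 / σ ^ 2 := by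
    rw [div_eq_mul_inv, ← one_div]
    linarith
  linarith

lemma Ff_mul_norm_le (hσ : 0 < σ) (hρ : 0 < ρ) :
    Ff y σ ρ x * ‖x - y‖ ≤ ρ ^ 3 / (4 * σ ^ 4) := by
  rcases lt_or_ge (dist x y) ρ with h | h
  · have hn : ‖x - y‖ ≤ ρ := by rw [← dist_eq_norm]; exact h.le
    have hn0 : (0:ℝ) ≤ ‖x - y‖ := norm_nonneg _
    have hu : 0 < uf y σ x := uf_pos y hσ x
    have hule := uf_le y hσ x
    have hF0 : 0 ≤ Ff y σ ρ x := Ff_nonneg y hσ hρ x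
    have hF_le : Ff y σ ρ x ≤ ρ ^ 2 / (4 * σ ^ 4) := by
      have h1 := qf_diff_le (vf y σ ρ x) (vf_nonneg y hσ x)
      have h4 : uf y σ x * σ ^ 2 ≤ 1 := by
        have := (le_div_iff₀ (by positivity : (0:ℝ) < σ ^ 2)).mp hule
        linarith
      have hF_eq : Ff y σ ρ x
          = (qf (vf y σ ρ x - 2) - qf (vf y σ ρ x - 4)) / (4 * ρ ^ 2) := rfl
      have hv : vf y σ ρ x = ρ ^ 2 * uf y σ x := rfl
      rw [hF_eq, div_le_div_iff₀ (by positivity) (by positivity)]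
      have h40 : (0:ℝ) ≤ uf y σ x * σ ^ 2 := by positivity
      have h5 : (uf y σ x * σ ^ 2) ^ 2 ≤ 1 := pow_le_one₀ h40 h4
      calc (qf (vf y σ ρ x - 2) - qf (vf y σ ρ x - 4)) * (4 * σ ^ 4)
          ≤ (vf y σ ρ x) ^ 2 * (4 * σ ^ 4) :=
            mul_le_mul_of_nonneg_right h1 (by positivity)
        _ = 4 * ρ ^ 4 * (uf y σ x * σ ^ 2) ^ 2 := by rw [hv]; ring
        _ ≤ 4 * ρ ^ 4 * 1 :=
            mul_le_mul_of_nonneg_left h5 (by positivity)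
        _ = ρ ^ 2 * (4 * ρ ^ 2) := by ring
    calc Ff y σ ρ x * ‖x - y‖ ≤ (ρ ^ 2 / (4 * σ ^ 4)) * ρ := by
          apply mul_le_mul hF_le hn hn0 (by positivity)
      _ = ρ ^ 3 / (4 * σ ^ 4) := by ring
  · rw [Ff_zero_far y hσ hρ h, zero_mul]
    positivity

lemma Sf_zero_far (hσ : 0 < σ) (hρ : 0 < ρ) (h : ρ ≤ dist x y) : Sf y σ ρ x = 0 := by
  have ht : ρ ^ 2 ≤ tf y x := by
    rw [tf_eq_dist]; exact pow_le_pow_left₀ hρ.le h 2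
  have hv : vf y σ ρ x < 1 := by
    unfold vf uf
    rw [mul_inv_lt_iff₀ (denom_pos y hσ x)]
    nlinarith
  have hF : Ff y σ ρ x = 0 := by
    unfold Ff hf1d
    rw [show ρ ^ 2 * (tf y x + σ ^ 2)⁻¹ - 2 = vf y σ ρ x - 2 from rfl,
      show ρ ^ 2 * (tf y x + σ ^ 2)⁻¹ - 4 = vf y σ ρ x - 4 from rfl,
      qf_of_nonpos (by linarith), qf_of_nonpos (by linarith)]
    simp
  have hcc : ccf y σ ρ x = 0 := by
    unfold ccf
    rw [max_eq_right (by linarith), max_eq_right (by linarith)]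
    simp
  unfold Sf
  rw [hF, hcc]
  ring

end Bounds

lemma measurable_P_apply (P : E3 → E3 →L[ℝ] E3) (hP : ∀ v : E3, Measurable fun x => P x v)
    {f : E3 → E3} (hf : Measurable f) : Measurable fun x => P x (f x) := by
  have hrepr : (fun x => P x (f x))
      = fun x => ∑ i : Fin 3, (f x i) • P x (EuclideanSpace.single i (1:ℝ)) := by
    funext x
    have hfx : f x = ∑ i : Fin 3, (f x i) • EuclideanSpace.single i (1:ℝ) := by
      have := (EuclideanSpace.basisFun (Fin 3) ℝ).sum_repr (f x)
      simp only [EuclideanSpace.basisFun_repr, EuclideanSpace.basisFun_apply] at this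
      exact this.symm
    conv_lhs => rw [hfx]
    rw [map_sum]
    simp
  rw [hrepr]
  exact Finset.measurable_sum _ fun i _ =>
    ((((EuclideanSpace.proj i : E3 →L[ℝ] ℝ).continuous.measurable).comp hf)).smul (hP _)

section Continuity

variable (y : E3) {σ ρ : ℝ}

lemma continuous_Sf (hσ : 0 < σ) : Continuous (Sf y σ ρ) ∧ Continuous (Ff y σ ρ)
    ∧ Continuous (ccf y σ ρ) ∧ Continuous (tf y) := by
  have htf_c : Continuous (tf y) :=
    Continuous.inner (continuous_id.sub continuous_const) (continuous_id.sub continuous_const)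
  have hden_c : Continuous fun x => (tf y x + σ ^ 2)⁻¹ :=
    (htf_c.add continuous_const).inv₀ fun x => ne_of_gt (denom_pos y hσ x)
  have hu_c : Continuous (uf y σ) := hden_c
  have hv_c : Continuous (vf y σ ρ) := continuous_const.mul hu_c
  have hF_c : Continuous (Ff y σ ρ) := by
    unfold Ff hf1d
    exact ((qf_contDiff.continuous.comp
        ((continuous_const.mul hden_c).sub continuous_const)).sub
      (qf_contDiff.continuous.comp
        ((continuous_const.mul hden_c).sub continuous_const))).div_const _
  have hcc_c : Continuous (ccf y σ ρ) := by
    unfold ccf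
    exact (((hv_c.sub continuous_const).max continuous_const).sub
      ((hv_c.sub continuous_const).max continuous_const)).mul (hu_c.pow 2)
  exact ⟨((continuous_const.mul hF_c).sub (hcc_c.mul htf_c)), hF_c, hcc_c, htf_c⟩

end Continuity

/-- The (integrated) monotonicity inequality. -/
lemma monotonicity {μ : Measure E3} {P : E3 → E3 →L[ℝ] E3} {H : E3 → E3}
    (adm : IsAdmissible μ P H) (hperp : IsPerp μ P H)
    (y : E3) {σ ρ : ℝ} (hσ : 0 < σ) (hσρ : σ ≤ ρ) :
    (μ (ball y σ)).toReal / σ ^ 2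
      ≤ 12 * (μ (ball y ρ)).toReal / ρ ^ 2 + ∫ x in ball y ρ, ‖H x‖ ^ 2 ∂μ := by
  haveI := adm.finite
  have hρ : 0 < ρ := lt_of_lt_of_le hσ hσρ
  obtain ⟨hS_c, hF_c, hcc_c, htf_c⟩ := continuous_Sf y (σ := σ) (ρ := ρ) hσ
  have hFV := adm.first_variation (Xf y σ ρ) (contDiff_Xf y hσ) (hasCompactSupport_Xf y hσ hρ)
  have h_ae : ∀ᵐ x ∂μ, ((P x).comp (P x) = P x ∧ (∀ u v : E3, ⟪P x u, v⟫ = ⟪u, P x v⟫) ∧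
      Module.finrank ℝ (LinearMap.range ((P x : E3 →ₗ[ℝ] E3))) = 2) ∧ P x (H x) = 0 :=
    adm.proj_ae.and hperp
  -- a.e. identity for the trace integrand
  have htr : ∀ᵐ x ∂μ,
      LinearMap.trace ℝ E3 ((P x).comp (fderiv ℝ (Xf y σ ρ) x) : E3 →ₗ[ℝ] E3)
      = Sf y σ ρ x + ccf y σ ρ x * (tf y x - ⟪x - y, P x (x - y)⟫) := by
    filter_upwards [h_ae] with x hx
    obtain ⟨⟨hidem, hsym, hrk⟩, hPH⟩ := hx
    rw [(hasFDerivAt_Xf y hσ hρ x).fderiv, trace_comp_formula (P x) hidem hrk]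
    simp only [ContinuousLinearMap.coe_smul', Pi.smul_apply, innerSL_apply_apply, smul_eq_mul]
    unfold Sf
    ring
  -- integrability
  have hS_int : Integrable (Sf y σ ρ) μ := by
    apply hS_c.integrable_of_hasCompactSupport
    apply HasCompactSupport.intro (isCompact_closedBall y ρ)
    intro x hx
    have hlt : ρ < dist x y := by simpa [Metric.mem_closedBall, not_le] using hx
    exact Sf_zero_far y x hσ hρ hlt.le
  have hψ_meas : AEStronglyMeasurable
      (fun x => ccf y σ ρ x * (tf y x - ⟪x - y, P x (x - y)⟫)) μ := by
    apply AEStronglyMeasurable.mul hcc_c.aestronglyMeasurable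
    apply AEStronglyMeasurable.sub htf_c.aestronglyMeasurable
    exact (((measurable_id.sub measurable_const).inner
      (measurable_P_apply P adm.meas_P (measurable_id.sub measurable_const)))).aestronglyMeasurable
  have hψ_int : Integrable (fun x => ccf y σ ρ x * (tf y x - ⟪x - y, P x (x - y)⟫)) μ := by
    apply Integrable.mono' (integrable_const (2 / σ ^ 2)) hψ_meas
    filter_upwards [h_ae] with x hx
    obtain ⟨⟨hidem, hsym, hrk⟩, hPH⟩ := hx
    have h := psi_bound y x (P x) (σ := σ) (ρ := ρ) hσ hidem hsym
    rw [Real.norm_eq_abs]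
    exact h
  have hH_int : Integrable H μ := adm.memL2.integrable one_le_two
  have hH2_int : Integrable (fun x => ‖H x‖ ^ 2) μ := by
    have h := adm.memL2.integrable_norm_rpow (by norm_num) (by norm_num)
    have h2 : (2:ℝ≥0∞).toReal = (2:ℝ) := by norm_num
    rw [h2] at h
    apply h.congr
    filter_upwards with x
    rw [show ((2:ℝ) = ((2:ℕ):ℝ)) by norm_num, Real.rpow_natCast]
  have hXH_int : Integrable (fun x => Ff y σ ρ x * ⟪x - y, H x⟫) μ := by
    apply Integrable.mono' (hH_int.norm.const_mul (ρ ^ 3 / (4 * σ ^ 4)))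
    · exact hF_c.aestronglyMeasurable.mul
        ((continuous_id.sub continuous_const).aestronglyMeasurable.inner adm.meas_H)
    · filter_upwards with x
      have h1 : |⟪x - y, H x⟫| ≤ ‖x - y‖ * ‖H x‖ := abs_real_inner_le_norm _ _
      have h2 := Ff_mul_norm_le y x hσ hρ
      have hF0 := Ff_nonneg y hσ hρ x
      rw [Real.norm_eq_abs, abs_mul, abs_of_nonneg hF0]
      calc Ff y σ ρ x * |⟪x - y, H x⟫| ≤ Ff y σ ρ x * (‖x - y‖ * ‖H x‖) := by
            exact mul_le_mul_of_nonneg_left h1 hF0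
        _ = (Ff y σ ρ x * ‖x - y‖) * ‖H x‖ := by ring
        _ ≤ (ρ ^ 3 / (4 * σ ^ 4)) * ‖H x‖ :=
            mul_le_mul_of_nonneg_right h2 (norm_nonneg _)
  -- rewrite the first variation identity
  have hlhs : ∫ x, LinearMap.trace ℝ E3 ((P x).comp (fderiv ℝ (Xf y σ ρ) x) : E3 →ₗ[ℝ] E3) ∂μ
      = ∫ x, Sf y σ ρ x ∂μ
        + ∫ x, ccf y σ ρ x * (tf y x - ⟪x - y, P x (x - y)⟫) ∂μ := by
    rw [integral_congr_ae htr, integral_add hS_int hψ_int]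
  have hrhs : ∫ x, ⟪Xf y σ ρ x, H x⟫ ∂μ = ∫ x, Ff y σ ρ x * ⟪x - y, H x⟫ ∂μ := by
    apply integral_congr_ae
    filter_upwards with x
    exact real_inner_smul_left _ _ _
  have hS_eq : ∫ x, Sf y σ ρ x ∂μ
      = ∫ x, (-2 * (Ff y σ ρ x * ⟪x - y, H x⟫)
          - ccf y σ ρ x * (tf y x - ⟪x - y, P x (x - y)⟫)) ∂μ := by
    rw [integral_sub ((hXH_int.const_mul (-2))) hψ_int]
    rw [integral_const_mul]
    rw [hlhs, hrhs] at hFV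
    linarith
  -- upper bound via Young's inequality
  have hup : ∫ x, Sf y σ ρ x ∂μ
      ≤ ∫ x, Set.indicator (ball y ρ) (fun z => ‖H z‖ ^ 2 / 2) x ∂μ := by
    rw [hS_eq]
    apply integral_mono_ae ((hXH_int.const_mul (-2)).sub hψ_int)
      ((hH2_int.div_const 2).indicator measurableSet_ball)
    filter_upwards [h_ae] with x hx
    obtain ⟨⟨hidem, hsym, hrk⟩, hPH⟩ := hx
    have hy := young_pointwise y x (P x) (H x) hσ hρ hidem hsym hPH
    have hind : Set.indicator (ball y ρ) (fun z => ‖H z‖ ^ 2 / 2) x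
        = Set.indicator (ball y ρ) (fun _ => ‖H x‖ ^ 2 / 2) x := by
      by_cases hmem : x ∈ ball y ρ <;> simp [hmem]
    rw [hind]
    exact hy
  have hup_val : ∫ x, Set.indicator (ball y ρ) (fun z => ‖H z‖ ^ 2 / 2) x ∂μ
      = (∫ x in ball y ρ, ‖H x‖ ^ 2 ∂μ) / 2 := by
    rw [integral_indicator measurableSet_ball, integral_div]
  -- lower bound via Claim A
  have hlow : (μ (ball y σ)).toReal * (1 / (2 * σ ^ 2))
        - (μ (ball y ρ)).toReal * (6 / ρ ^ 2) ≤ ∫ x, Sf y σ ρ x ∂μ := by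
    have hint1 : Integrable (Set.indicator (ball y σ) (fun _ => 1 / (2 * σ ^ 2)) : E3 → ℝ) μ :=
      (integrable_const _).indicator measurableSet_ball
    have hint2 : Integrable (Set.indicator (ball y ρ) (fun _ => 6 / ρ ^ 2) : E3 → ℝ) μ :=
      (integrable_const _).indicator measurableSet_ball
    have hmono := integral_mono (hint1.sub hint2) hS_int (fun x => Sf_lower y hσ hσρ x)
    simp only [Pi.sub_apply] at hmono
    rw [integral_sub hint1 hint2, integral_indicator_const _ measurableSet_ball,
      integral_indicator_const _ measurableSet_ball] at hmono
    simpa [smul_eq_mul, mul_comm, measureReal_def] using hmono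
  -- conclude
  have e1 : (μ (ball y σ)).toReal / σ ^ 2
      = 2 * ((μ (ball y σ)).toReal * (1 / (2 * σ ^ 2))) := by
    field_simp
  have e2 : 12 * (μ (ball y ρ)).toReal / ρ ^ 2
      = 2 * ((μ (ball y ρ)).toReal * (6 / ρ ^ 2)) := by
    ring
  rw [e1, e2]
  rw [hup_val] at hup
  linarith

set_option maxHeartbeats 1000000 in
/-- the upper diameter bound in Simon's lemma. There is a universal constant
`C > 0` such that for any nonzero admissible triple with perpendicular mean curvature whose
(compact) support is connected and whose lower density is at least `π` at every point of the
support, one has `diam(supp μ) ≤ C √(μ(ℝ³) · ∫ |H|² dμ)`. -/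

theorem diam_le_sqrt_mass_mul_willmore :
    ∃ C > (0 : ℝ), ∀ (μ : Measure E3) (P : E3 → E3 →L[ℝ] E3) (H : E3 → E3),
      IsAdmissible μ P H → μ ≠ 0 → IsPerp μ P H → IsConnected (mSupport μ) →
      (∀ y ∈ mSupport μ,
        Real.pi ≤ Filter.liminf (fun σ : ℝ => (μ (ball y σ)).toReal / σ ^ 2)
          (nhdsWithin 0 (Set.Ioi 0))) →
      diam (mSupport μ) ≤ C * Real.sqrt (Mass μ * Willmore μ H) := by
  have hπ : (0:ℝ) < Real.pi := Real.pi_pos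
  refine ⟨104 / Real.pi, by positivity, ?_⟩
  intro μ P H adm hμ0 hperp hconn hdens
  haveI := adm.finite
  set W := Willmore μ H with hWdef
  set M := Mass μ with hMdef
  have hM0 : 0 < M := by
    rw [hMdef, Mass]
    exact ENNReal.toReal_pos (ne_of_gt (Measure.measure_univ_pos.mpr hμ0)) (measure_ne_top μ _)
  have hH2_int : Integrable (fun x => ‖H x‖ ^ 2) μ := by
    have h := adm.memL2.integrable_norm_rpow (by norm_num) (by norm_num)
    have h2 : (2:ℝ≥0∞).toReal = (2:ℝ) := by norm_num
    rw [h2] at h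
    apply h.congr
    filter_upwards with x
    rw [show ((2:ℝ) = ((2:ℕ):ℝ)) by norm_num, Real.rpow_natCast]
  have hloc_le : ∀ (y : E3) (ρ : ℝ), (∫ x in ball y ρ, ‖H x‖ ^ 2 ∂μ) ≤ W := by
    intro y ρ
    rw [hWdef, Willmore]
    exact setIntegral_le_integral hH2_int (Filter.Eventually.of_forall fun x => by positivity)
  have hloc0 : ∀ (y : E3) (ρ : ℝ), 0 ≤ ∫ x in ball y ρ, ‖H x‖ ^ 2 ∂μ := by
    intro y ρ
    exact integral_nonneg fun x => by positivity
  have hball_le : ∀ (y : E3) (ρ : ℝ), (μ (ball y ρ)).toReal ≤ M := fun y ρ =>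
    ENNReal.toReal_mono (measure_ne_top μ _) (measure_mono (Set.subset_univ _))
  have hball0 : ∀ (y : E3) (ρ : ℝ), 0 ≤ (μ (ball y ρ)).toReal := fun y ρ =>
    ENNReal.toReal_nonneg
  -- Step 2 : density + monotonicity
  have key : ∀ y ∈ mSupport μ, ∀ ρ : ℝ, 0 < ρ →
      Real.pi ≤ 12 * (μ (ball y ρ)).toReal / ρ ^ 2 + ∫ x in ball y ρ, ‖H x‖ ^ 2 ∂μ := by
    intro y hy ρ hρ
    have hliminf := hdens y hy
    have hev : ∀ᶠ σ in nhdsWithin (0:ℝ) (Set.Ioi 0),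
        (μ (ball y σ)).toReal / σ ^ 2
          ≤ 12 * (μ (ball y ρ)).toReal / ρ ^ 2 + ∫ x in ball y ρ, ‖H x‖ ^ 2 ∂μ := by
      filter_upwards [Ioc_mem_nhdsGT hρ] with σ hσ
      exact monotonicity adm hperp y hσ.1 hσ.2
    have hbdd : IsBoundedUnder (· ≥ ·) (nhdsWithin (0:ℝ) (Set.Ioi 0))
        (fun σ : ℝ => (μ (ball y σ)).toReal / σ ^ 2) :=
      isBoundedUnder_of ⟨0, fun σ => by positivity⟩
    exact le_trans hliminf (Filter.liminf_le_of_frequently_le hev.frequently hbdd)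
  obtain ⟨y₀, hy₀⟩ := hconn.nonempty
  -- Step 3 : lower Willmore bound
  have hW_ge : Real.pi ≤ W := by
    by_contra hcon
    push_neg at hcon
    set ε := Real.pi - W with hε
    have hε0 : 0 < ε := by rw [hε]; linarith
    set A := 12 * M / ε with hA
    have hA0 : 0 ≤ A := by positivity
    set ρ := Real.sqrt A + 1 with hρdef
    have hρ0 : 0 < ρ := by positivity
    have hρ2 : A < ρ ^ 2 := by
      have h1 : Real.sqrt A ^ 2 = A := Real.sq_sqrt hA0
      nlinarith [Real.sqrt_nonneg A]
    have hkey := key y₀ hy₀ ρ hρ0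
    have h1 : 12 * (μ (ball y₀ ρ)).toReal / ρ ^ 2 ≤ 12 * M / ρ ^ 2 := by
      apply div_le_div_of_nonneg_right ?_ (by positivity)
      linarith [hball_le y₀ ρ]
    have h2 : 12 * M / ρ ^ 2 < ε := by
      rw [div_lt_iff₀ (by positivity)]
      have hAe : A * ε = 12 * M := by
        rw [hA]; field_simp
      nlinarith [hρ2, hε0]
    linarith [hloc_le y₀ ρ, hkey]
  have hW0 : 0 < W := lt_of_lt_of_le hπ hW_ge
  -- radius
  set r := Real.sqrt (M / W) with hrdef
  have hr0 : 0 < r := Real.sqrt_pos.mpr (by positivity)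
  have hr2 : r ^ 2 = M / W := Real.sq_sqrt (by positivity)
  have hrW : r * W = Real.sqrt (M * W) := by
    rw [hrdef, ← Real.sqrt_sq hW0.le, ← Real.sqrt_mul (by positivity)]
    congr 1
    field_simp
    rw [Real.sq_sqrt (sq_nonneg W)]
  have hsq0 : 0 ≤ Real.sqrt (M * W) := Real.sqrt_nonneg _
  -- it suffices to bound pair distances
  apply diam_le_of_forall_dist_le (by positivity)
  intro x₁ hx₁ x₂ hx₂
  rcases le_or_gt (dist x₁ x₂) (8 * r) with hD | hD
  · -- short distance : trivial case
    have hr_eq : r = Real.sqrt (M * W) / W := by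
      rw [eq_div_iff hW0.ne']
      exact hrW
    calc dist x₁ x₂ ≤ 8 * r := hD
      _ = 8 * (Real.sqrt (M * W) / W) := by rw [hr_eq]
      _ ≤ 8 * (Real.sqrt (M * W) / Real.pi) :=
          mul_le_mul_of_nonneg_left
            (div_le_div_of_nonneg_left hsq0 hπ hW_ge) (by norm_num)
      _ = 8 * Real.sqrt (M * W) / Real.pi := by ring
      _ ≤ 104 * Real.sqrt (M * W) / Real.pi := by
          apply div_le_div_of_nonneg_right ?_ hπ.le
          nlinarith
      _ = 104 / Real.pi * Real.sqrt (M * W) := by ring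
  · -- packing argument
    set D := dist x₁ x₂ with hDdef
    set n := Nat.floor (D / (4 * r)) with hn
    have hDpos : 0 < D := lt_trans (by positivity) hD
    have hn2 : 2 ≤ n := by
      apply Nat.le_floor
      rw [le_div_iff₀ (by positivity)]
      push_cast
      linarith
    have hn0 : 0 < (n:ℝ) := by
      have : (2:ℝ) ≤ (n:ℝ) := by exact_mod_cast hn2
      linarith
    have hnle : (n:ℝ) * (4 * r) ≤ D := by
      have := Nat.floor_le (by positivity : 0 ≤ D / (4 * r))
      rw [← hn] at this
      calc (n:ℝ) * (4 * r) ≤ (D / (4 * r)) * (4 * r) :=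
            mul_le_mul_of_nonneg_right this (by positivity)
        _ = D := by field_simp
    -- choose the chain of points by the intermediate value theorem
    have hIVT : ∀ θ ∈ Set.Icc (0:ℝ) D, ∃ z ∈ mSupport μ, dist z x₁ = θ := by
      intro θ hθ
      have hcont : ContinuousOn (fun z => dist z x₁) (mSupport μ) :=
        (continuous_id.dist continuous_const).continuousOn
      have him := hconn.isPreconnected.intermediate_value hx₁ hx₂ hcont
      have hmem : θ ∈ Set.Icc (dist x₁ x₁) (dist x₂ x₁) := by
        rw [dist_self, dist_comm x₂ x₁]
        exact hθ
      obtain ⟨z, hz, hz2⟩ := him hmem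
      exact ⟨z, hz, hz2⟩
    have hzex : ∀ k : ℕ, ∃ z, k < n → z ∈ mSupport μ ∧ dist z x₁ = (4 * k + 2) * r := by
      intro k
      by_cases hk : k < n
      · have hθm : ((4 * (k:ℝ) + 2) * r) ∈ Set.Icc (0:ℝ) D := by
          constructor
          · positivity
          · have hkn : (k:ℝ) ≤ (n:ℝ) - 1 := by
              have : (k:ℝ) + 1 ≤ (n:ℝ) := by exact_mod_cast hk
              linarith
            nlinarith
        obtain ⟨z, hz1, hz2⟩ := hIVT _ hθm
        exact ⟨z, fun _ => ⟨hz1, hz2⟩⟩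
      · exact ⟨x₁, fun h => absurd h hk⟩
    choose z hzp using hzex
    -- the balls are pairwise disjoint
    have hdisj : Set.Pairwise ↑(Finset.range n) (Function.onFun Disjoint fun k => ball (z k) r) := by
      intro j hj k hk hjk
      simp only [Finset.coe_range, Set.mem_Iio] at hj hk
      obtain ⟨hjs, hjd⟩ := hzp j hj
      obtain ⟨hks, hkd⟩ := hzp k hk
      have hsep : 4 * r ≤ dist (z j) (z k) := by
        have habs := abs_dist_sub_le (z j) (z k) x₁
        rw [hjd, hkd] at habs
        have hcast : (1:ℝ) ≤ |(j:ℝ) - (k:ℝ)| := by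
          rcases lt_or_gt_of_ne hjk with h | h
          · rw [abs_sub_comm, abs_of_nonneg (by
              have : (j:ℝ) + 1 ≤ (k:ℝ) := by exact_mod_cast h
              linarith)]
            have : (j:ℝ) + 1 ≤ (k:ℝ) := by exact_mod_cast h
            linarith
          · rw [abs_of_nonneg (by
              have : (k:ℝ) + 1 ≤ (j:ℝ) := by exact_mod_cast h
              linarith)]
            have : (k:ℝ) + 1 ≤ (j:ℝ) := by exact_mod_cast h
            linarith
        have heq : (4 * (j:ℝ) + 2) * r - (4 * (k:ℝ) + 2) * r = 4 * ((j:ℝ) - (k:ℝ)) * r := by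
          ring
        rw [heq] at habs
        have habs2 : 4 * |(j:ℝ) - (k:ℝ)| * r ≤ dist (z j) (z k) := by
          rw [abs_mul, abs_mul, abs_of_nonneg (by norm_num : (0:ℝ) ≤ 4),
            abs_of_nonneg hr0.le] at habs
          linarith [habs]
        nlinarith
      exact ball_disjoint_ball (by linarith)
    -- sum the density inequality over the disjoint balls
    have hπsum : (n:ℝ) * Real.pi
        ≤ ∑ k ∈ Finset.range n,
          (12 * (μ (ball (z k) r)).toReal / r ^ 2 + ∫ x in ball (z k) r, ‖H x‖ ^ 2 ∂μ) := by
      rw [show (n:ℝ) * Real.pi = ∑ _k ∈ Finset.range n, Real.pi by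
        rw [Finset.sum_const, Finset.card_range]; ring]
      apply Finset.sum_le_sum
      intro k hk
      rw [Finset.mem_range] at hk
      exact key (z k) ((hzp k hk).1) r hr0
    have hsum1 : ∑ k ∈ Finset.range n, (μ (ball (z k) r)).toReal ≤ M := by
      rw [← ENNReal.toReal_sum (fun a _ => measure_ne_top μ _)]
      rw [← measure_biUnion_finset hdisj (fun k _ => measurableSet_ball)]
      exact ENNReal.toReal_mono (measure_ne_top μ _) (measure_mono (Set.subset_univ _))
    have hsum2 : ∑ k ∈ Finset.range n, (∫ x in ball (z k) r, ‖H x‖ ^ 2 ∂μ) ≤ W := by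
      rw [← integral_biUnion_finset (Finset.range n) (fun k _ => measurableSet_ball) hdisj
        (fun k _ => hH2_int.integrableOn)]
      rw [hWdef, Willmore]
      exact setIntegral_le_integral hH2_int (Filter.Eventually.of_forall fun x => by positivity)
    have hsplit : ∑ k ∈ Finset.range n,
        (12 * (μ (ball (z k) r)).toReal / r ^ 2 + ∫ x in ball (z k) r, ‖H x‖ ^ 2 ∂μ)
        = (12 / r ^ 2) * (∑ k ∈ Finset.range n, (μ (ball (z k) r)).toReal)
          + ∑ k ∈ Finset.range n, (∫ x in ball (z k) r, ‖H x‖ ^ 2 ∂μ) := by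
      rw [Finset.sum_add_distrib, Finset.mul_sum]
      congr 1
      apply Finset.sum_congr rfl
      intro k _
      ring
    have hr2' : 12 / r ^ 2 * M = 12 * W := by
      rw [hr2]
      field_simp
    have hcount : (n:ℝ) * Real.pi ≤ 13 * W := by
      have h12 : (12 / r ^ 2) * (∑ k ∈ Finset.range n, (μ (ball (z k) r)).toReal)
          ≤ 12 * W := by
        rw [← hr2']
        apply mul_le_mul_of_nonneg_left hsum1 (by positivity)
      rw [hsplit] at hπsum
      linarith
    -- conclude
    have hfinal : D * Real.pi ≤ 104 * (r * W) := by
      have hstep : D / (8 * r) ≤ (n:ℝ) := by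
        have hfl : D / (4 * r) < (n:ℝ) + 1 := Nat.lt_floor_add_one _
        have h2n : (2:ℝ) ≤ (n:ℝ) := by exact_mod_cast hn2
        rw [div_le_iff₀ (by positivity)]
        rw [div_lt_iff₀ (by positivity)] at hfl
        nlinarith
      have hmul := mul_le_mul_of_nonneg_right hstep hπ.le
      rw [div_mul_eq_mul_div, div_le_iff₀ (by positivity)] at hmul
      have h8 : (0:ℝ) < 8 * r := by positivity
      calc D * Real.pi ≤ (n:ℝ) * Real.pi * (8 * r) := hmul
        _ = 8 * r * ((n:ℝ) * Real.pi) := by ring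
        _ ≤ 8 * r * (13 * W) := mul_le_mul_of_nonneg_left hcount h8.le
        _ = 104 * (r * W) := by ring
    calc dist x₁ x₂ = D := rfl
      _ ≤ 104 * (r * W) / Real.pi := by
          rw [le_div_iff₀ hπ]
          linarith
      _ = 104 / Real.pi * Real.sqrt (M * W) := by
          rw [hrW]
          ring

end
end

section
/- Let x₀ > 0 and let f : (0, x₀] → [0, ∞) be non-decreasing with f(x₀) > 0, and suppose there exist γ ∈ (1/2, 1) and α ∈ (0, 1/8) such that f(x/2) ≤ γ f(x) + α x² for all x ∈ (0, x₀]. Then there exist constants C > 0 and β ∈ (0, 1) such that f(x) ≤ C (x/x₀)^β f(x₀) for all x ∈ (0, x₀]. -/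
/-- the perturbed power-decay lemma (Corollary A.4 of the paper). If
`f : (0, x₀] → [0, ∞)` is non-decreasing with `f(x₀) > 0` and
`f(x/2) ≤ γ f(x) + α x²` on `(0, x₀]` with `γ ∈ (1/2, 1)` and `α ∈ (0, 1/8)`, then
`f(x) ≤ C (x/x₀)^β f(x₀)` on `(0, x₀]` for some `C > 0` and `β ∈ (0,1)`. -/
theorem power_decay_perturbed (x₀ : ℝ) (hx₀ : 0 < x₀) (f : ℝ → ℝ)
    (hnonneg : ∀ x ∈ Set.Ioc 0 x₀, 0 ≤ f x) (hfx₀ : 0 < f x₀)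
    (hmono : ∀ x ∈ Set.Ioc 0 x₀, ∀ y ∈ Set.Ioc 0 x₀, x ≤ y → f x ≤ f y)
    (γ : ℝ) (hγ : γ ∈ Set.Ioo (1 / 2 : ℝ) 1)
    (α : ℝ) (hα : α ∈ Set.Ioo (0 : ℝ) (1 / 8))
    (hhalf : ∀ x ∈ Set.Ioc 0 x₀, f (x / 2) ≤ γ * f x + α * x ^ 2) :
    ∃ C > (0 : ℝ), ∃ β ∈ Set.Ioo (0 : ℝ) 1,
      ∀ x ∈ Set.Ioc 0 x₀, f x ≤ C * (x / x₀) ^ β * f x₀ := by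
  obtain ⟨hγ1, hγ2⟩ := hγ
  obtain ⟨hα1, hα2⟩ := hα
  set g : ℝ := max γ (α + 1/4) with hgdef
  have hg1 : 1/2 < g := lt_of_lt_of_le hγ1 (le_max_left _ _)
  have hg2 : g < 1 := max_lt hγ2 (by linarith)
  have hg0 : (0:ℝ) < g := by linarith
  set β : ℝ := Real.logb (1/2) g with hβdef
  have hβval : (1/2 : ℝ) ^ β = g := Real.rpow_logb (by norm_num) (by norm_num) hg0
  have hlh : Real.log (1/2) < 0 := Real.log_neg (by norm_num) (by norm_num)
  have hβ0 : 0 < β := by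
    rw [hβdef, Real.logb]
    exact div_pos_of_neg_of_neg (Real.log_neg hg0 hg2) hlh
  have hβ1 : β < 1 := by
    rw [hβdef, Real.logb, div_lt_one_of_neg hlh]
    exact Real.log_lt_log (by norm_num) hg1
  -- membership of dyadic points
  have hmem : ∀ n : ℕ, x₀ / 2^n ∈ Set.Ioc 0 x₀ := by
    intro n
    refine ⟨by positivity, ?_⟩
    exact div_le_self hx₀.le (one_le_pow₀ (by norm_num))
  -- key induction
  have key : ∀ n : ℕ, f (x₀ / 2^n) + (x₀ / 2^n)^2 ≤ g^n * (f x₀ + x₀^2) := by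
    intro n
    induction n with
    | zero => simp
    | succ n ih =>
      have h1 := hhalf _ (hmem n)
      have h4 : 0 ≤ f (x₀ / 2^n) := hnonneg _ (hmem n)
      have e : x₀ / 2^(n+1) = (x₀ / 2^n) / 2 := by ring
      rw [e]
      have h2 : γ ≤ g := le_max_left _ _
      have h3 : α + 1/4 ≤ g := le_max_right _ _
      calc f ((x₀/2^n)/2) + ((x₀/2^n)/2)^2
          ≤ γ * f (x₀/2^n) + α*(x₀/2^n)^2 + ((x₀/2^n)/2)^2 := by linarith
        _ ≤ g * (f (x₀/2^n) + (x₀/2^n)^2) := by nlinarith [sq_nonneg (x₀/2^n)]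
        _ ≤ g * (g^n * (f x₀ + x₀^2)) := mul_le_mul_of_nonneg_left ih hg0.le
        _ = g^(n+1) * (f x₀ + x₀^2) := by ring
  refine ⟨(f x₀ + x₀^2) / (g * f x₀), by positivity, β, ⟨hβ0, hβ1⟩, ?_⟩
  intro x hx
  obtain ⟨hx1, hx2⟩ := hx
  have hexists : ∃ n : ℕ, x₀ / 2^(n+1) < x := by
    obtain ⟨n, hn⟩ := pow_unbounded_of_one_lt (x₀ / x) (by norm_num : (1:ℝ) < 2)
    refine ⟨n, ?_⟩
    rw [div_lt_iff₀ (by positivity)]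
    rw [div_lt_iff₀ hx1] at hn
    have : (2:ℝ)^n ≤ 2^(n+1) := by
      apply pow_le_pow_right₀ (by norm_num); omega
    nlinarith
  set n := Nat.find hexists with hndef
  have hn : x₀ / 2^(n+1) < x := Nat.find_spec hexists
  have hxle : x ≤ x₀ / 2^n := by
    rcases Nat.eq_zero_or_pos n with h0 | hpos
    · rw [h0]; simpa using hx2
    · have hmin := Nat.find_min hexists (m := n-1) (by omega)
      have e : n - 1 + 1 = n := by omega
      rw [e] at hmin
      exact le_of_not_gt hmin
  have hfxbound : f x ≤ g^n * (f x₀ + x₀^2) := by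
    have h5 : f x ≤ f (x₀/2^n) := hmono x ⟨hx1, hx2⟩ _ (hmem n) hxle
    have h6 := key n
    nlinarith [sq_nonneg (x₀/2^n)]
  have h1 : ((1/2:ℝ)^(n+1)) ≤ x/x₀ := by
    have e2 : (1/2:ℝ)^(n+1) * x₀ = x₀ / 2^(n+1) := by
      rw [one_div, inv_pow]; ring
    rw [le_div_iff₀ hx₀, e2]
    exact hn.le
  have hgpow : g^(n+1) ≤ (x/x₀)^β := by
    calc g^(n+1) = ((1/2:ℝ)^β)^(n+1) := by rw [hβval]
      _ = ((1/2:ℝ)^(n+1)) ^ β := by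
          rw [← Real.rpow_natCast ((1/2:ℝ)^β) (n+1), ← Real.rpow_natCast (1/2:ℝ) (n+1),
            ← Real.rpow_mul (by norm_num), ← Real.rpow_mul (by norm_num), mul_comm]
      _ ≤ (x/x₀)^β := Real.rpow_le_rpow (by positivity) h1 hβ0.le
  have hgn : g^n ≤ (x/x₀)^β / g := by
    rw [le_div_iff₀ hg0]
    calc g^n * g = g^(n+1) := by ring
      _ ≤ (x/x₀)^β := hgpow
  calc f x ≤ g^n * (f x₀ + x₀^2) := hfxbound
    _ ≤ ((x/x₀)^β / g) * (f x₀ + x₀^2) := by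
        apply mul_le_mul_of_nonneg_right hgn (by positivity)
    _ = (f x₀ + x₀^2)/(g * f x₀) * (x/x₀)^β * f x₀ := by
        field_simp
end
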